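/- arXiv:math/0403293 — 2 statements merged into one kernel-verified Lean document; each statement's English description precedes it below -/
import Mathlib

section
/- Let G ⊆ E be a set which is closed (in the topology generated by the seminorms ‖·‖_{τ,s}), bounded (there exist constants M_{τ,s} with ‖u‖_{τ,s} ≤ M_{τ,s} for all u ∈ G and all (τ,s) ∈ Δ), and uniformly continuous (for every ε > 0 and every (τ,s) ∈ Δ there is δ > 0 such that t₁, t₂ ∈ [0,τ], |t₁ − t₂| < δ implies sup_{u∈G} ‖u(t₁) − u(t₂)‖_s < ε). Then G is compact in E. -/
open Filter Topology Set

/-- The triangle `Δ = {(τ,s) : τ > 0, 0 < s < 1, 1 - s - τa > 0}`. -/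
def InDelta (a τ s : ℝ) : Prop :=
  0 < τ ∧ 0 < s ∧ s < 1 ∧ 1 - s - τ * a > 0

/-- Membership in the space `E = ⋂_{(τ,s)∈Δ} C([0,τ], E_s)`: for every
`(τ,s) ∈ Δ` the function takes values in `E_s` on `[0,τ]` and is continuous
there with respect to the norm `N s`. -/
def MemScaleSpace {X : Type*} [NormedAddCommGroup X] [NormedSpace ℝ X]
    (E : ℝ → Submodule ℝ X) (N : ℝ → X → ℝ) (a : ℝ) (u : ℝ → X) : Prop :=
  ∀ τ s : ℝ, InDelta a τ s →
    (∀ t ∈ Icc (0:ℝ) τ, u t ∈ E s) ∧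
    (∀ t ∈ Icc (0:ℝ) τ, ∀ ε > (0:ℝ), ∃ δ > (0:ℝ), ∀ t' ∈ Icc (0:ℝ) τ,
      |t' - t| < δ → N s (u t' - u t) < ε)

/-- Convergence `uₖ → v` in `E`, i.e. with respect to every seminorm
`‖u‖_{τ,s} = max_{0≤t≤τ} N s (u t)`, `(τ,s) ∈ Δ`. -/
def TendstoScaleSpace {X : Type*} [NormedAddCommGroup X] [NormedSpace ℝ X]
    (N : ℝ → X → ℝ) (a : ℝ) (u : ℕ → ℝ → X) (v : ℝ → X) : Prop :=
  ∀ τ s : ℝ, InDelta a τ s → ∀ ε > (0:ℝ), ∃ K₀ : ℕ, ∀ k ≥ K₀,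
    ∀ t ∈ Icc (0:ℝ) τ, N s (u k t - v t) < ε

/-- Diagonal subsequence extraction. -/
lemma diag_subseq {α : Type*} (x : ℕ → α) (P : ℕ → (ℕ → α) → Prop)
    (hmono : ∀ n (y : ℕ → α) (g : ℕ → ℕ), (∀ k, k ≤ g k) → P n y → P n (fun k => y (g k)))
    (hext : ∀ n (φ : ℕ → ℕ), StrictMono φ → ∃ ψ : ℕ → ℕ, StrictMono ψ ∧
      P n (fun k => x (φ (ψ k)))) :
    ∃ φ : ℕ → ℕ, StrictMono φ ∧ ∀ n, P n (fun k => x (φ (k + n))) := by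
  classical
  choose Ψ hΨmono hΨP using hext
  let Φ : ℕ → {f : ℕ → ℕ // StrictMono f} :=
    Nat.rec ⟨Ψ 0 id strictMono_id, hΨmono 0 id strictMono_id⟩
      (fun n ih => ⟨fun m => ih.1 (Ψ (n+1) ih.1 ih.2 m),
        ih.2.comp (hΨmono (n+1) ih.1 ih.2)⟩)
  have hΦsucc : ∀ n m, (Φ (n+1)).1 m = (Φ n).1 (Ψ (n+1) (Φ n).1 (Φ n).2 m) :=
    fun n m => rfl
  have hP : ∀ n, P n (fun k => x ((Φ n).1 k)) := by
    intro n
    cases n with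
    | zero => exact hΨP 0 id strictMono_id
    | succ n => exact hΨP (n+1) (Φ n).1 (Φ n).2
  have hfac : ∀ n j, ∃ ρ : ℕ → ℕ, (∀ i, i ≤ ρ i) ∧ ∀ m, (Φ (n + j)).1 m = (Φ n).1 (ρ m) := by
    intro n j
    induction j with
    | zero => exact ⟨id, fun i => le_rfl, fun m => rfl⟩
    | succ j ih =>
      obtain ⟨ρ, hρ, hρeq⟩ := ih
      refine ⟨fun m => ρ (Ψ (n+j+1) (Φ (n+j)).1 (Φ (n+j)).2 m), ?_, ?_⟩
      · intro i
        exact le_trans ((hΨmono (n+j+1) _ _).le_apply) (hρ _)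
      · intro m
        rw [show n + (j+1) = (n+j) + 1 from rfl, hΦsucc, hρeq]
  refine ⟨fun k => (Φ k).1 k, ?_, ?_⟩
  · intro i j hij
    induction j with
    | zero => omega
    | succ j ih =>
      have h1 : (Φ j).1 j < (Φ (j+1)).1 (j+1) := by
        rw [hΦsucc]
        calc (Φ j).1 j < (Φ j).1 (j+1) := (Φ j).2 (by omega)
          _ ≤ (Φ j).1 (Ψ (j+1) (Φ j).1 (Φ j).2 (j+1)) :=
            (Φ j).2.monotone ((hΨmono (j+1) _ _).le_apply)
      rcases Nat.lt_succ_iff_lt_or_eq.1 hij with h | h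
      · exact lt_trans (ih h) h1
      · subst h; exact h1
  · intro n
    have hgk : ∀ k, ∃ m, n + k ≤ m ∧ (Φ (n+k)).1 (n+k) = (Φ n).1 m := by
      intro k
      obtain ⟨ρ, hρ, hρeq⟩ := hfac n k
      exact ⟨ρ (n+k), hρ _, hρeq _⟩
    choose g hg1 hg2 using hgk
    have key := hmono n (fun k => x ((Φ n).1 k)) g (fun k => le_trans (by omega) (hg1 k)) (hP n)
    have heq : (fun k => x ((Φ (k+n)).1 (k+n))) = fun k => x ((Φ n).1 (g k)) :=
      funext fun k => by rw [Nat.add_comm k n, hg2 k]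
    exact heq ▸ key


set_option maxHeartbeats 2000000 in
/-- **Compactness criterion in the scale space `E`** (Lemma 3.2 of the paper):
if a closed set `G ⊆ E` is uniformly continuous and bounded, then it is compact
(here: sequentially compact, which is equivalent since the topology of `E` is
generated by a countable dominating family of seminorms).

The scale `{(E_s, N s)}_{0<s<1}` sits inside an ambient Banach space `X`, with
monotone inclusions and norms, complete levels and compact embeddings. -/
theorem scale_space_closed_bounded_unifCont_compact
    {X : Type*} [NormedAddCommGroup X] [NormedSpace ℝ X] [CompleteSpace X]
    (E : ℝ → Submodule ℝ X) (N : ℝ → X → ℝ)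
    -- the scale structure
    (hscale_mono : ∀ s s' : ℝ, 0 < s → s < s' → s' < 1 → E s' ≤ E s)
    (hnorm_mono : ∀ s s' : ℝ, 0 < s → s < s' → s' < 1 → ∀ x ∈ E s', N s x ≤ N s' x)
    (hN_nonneg : ∀ s : ℝ, 0 < s → s < 1 → ∀ x ∈ E s, 0 ≤ N s x)
    (hN_def : ∀ s : ℝ, 0 < s → s < 1 → ∀ x ∈ E s, (N s x = 0 ↔ x = 0))
    (hN_add : ∀ s : ℝ, 0 < s → s < 1 → ∀ x ∈ E s, ∀ y ∈ E s,
      N s (x + y) ≤ N s x + N s y)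
    (hN_smul : ∀ s : ℝ, 0 < s → s < 1 → ∀ (c : ℝ), ∀ x ∈ E s, N s (c • x) = |c| * N s x)
    (hN_ambient : ∀ s : ℝ, 0 < s → s < 1 → ∀ x ∈ E s, ‖x‖ ≤ N s x)
    (hcomplete : ∀ s : ℝ, 0 < s → s < 1 → ∀ u : ℕ → X, (∀ k, u k ∈ E s) →
      (∀ ε > (0:ℝ), ∃ K₀ : ℕ, ∀ m ≥ K₀, ∀ n ≥ K₀, N s (u m - u n) < ε) →
      ∃ l ∈ E s, Tendsto (fun k => N s (u k - l)) atTop (𝓝 0))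
    (hcompact : ∀ s s' : ℝ, 0 < s → s < s' → s' < 1 → ∀ (u : ℕ → X) (C : ℝ),
      (∀ k, u k ∈ E s') → (∀ k, N s' (u k) ≤ C) →
      ∃ φ : ℕ → ℕ, StrictMono φ ∧ ∃ l ∈ E s,
        Tendsto (fun k => N s (u (φ k) - l)) atTop (𝓝 0))
    (a : ℝ) (ha : 0 < a)
    (G : Set (ℝ → X)) (hG_sub : ∀ u ∈ G, MemScaleSpace E N a u)
    -- `G` is closed in `E` (sequentially, for the seminorm topology)
    (hG_closed : ∀ u : ℕ → ℝ → X, (∀ k, u k ∈ G) → ∀ v : ℝ → X,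
      MemScaleSpace E N a v → TendstoScaleSpace N a u v → v ∈ G)
    -- `G` is bounded: for each `(τ,s) ∈ Δ` there is `M_{τ,s}` with `‖u‖_{τ,s} ≤ M_{τ,s}`
    (hG_bdd : ∀ τ s : ℝ, InDelta a τ s → ∃ Mts : ℝ, ∀ u ∈ G,
      ∀ t ∈ Icc (0:ℝ) τ, N s (u t) ≤ Mts)
    -- `G` is uniformly continuous
    (hG_unifCont : ∀ ε > (0:ℝ), ∀ τ s : ℝ, InDelta a τ s → ∃ δ > (0:ℝ),
      ∀ t₁ ∈ Icc (0:ℝ) τ, ∀ t₂ ∈ Icc (0:ℝ) τ, |t₁ - t₂| < δ →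
        ∀ u ∈ G, N s (u t₁ - u t₂) < ε) :
    -- `G` is (sequentially) compact in `E`
    ∀ u : ℕ → ℝ → X, (∀ k, u k ∈ G) →
      ∃ φ : ℕ → ℕ, StrictMono φ ∧ ∃ v ∈ G, TendstoScaleSpace N a (fun k => u (φ k)) v := by
  classical
  intro u hu
  haveI : Nonempty X := ⟨0⟩
  -- symmetry of the seminorm on differences
  have hNsub : ∀ s : ℝ, 0 < s → s < 1 → ∀ x y : X, x ∈ E s → y ∈ E s →
      N s (x - y) = N s (y - x) := by
    intro s hs0 hs1 x y hx hy
    have h := hN_smul s hs0 hs1 (-1) (y - x) (sub_mem hy hx)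
    simpa [neg_sub] using h
  -- triangle inequality for differences
  have htri : ∀ s : ℝ, 0 < s → s < 1 → ∀ x y z : X, x ∈ E s → y ∈ E s → z ∈ E s →
      N s (x - z) ≤ N s (x - y) + N s (y - z) := by
    intro s hs0 hs1 x y z hx hy hz
    have h := hN_add s hs0 hs1 (x - y) (sub_mem hx hy) (y - z) (sub_mem hy hz)
    simpa [sub_add_sub_cancel] using h
  -- a countable dominating family of levels in Δ
  obtain ⟨e, he⟩ : ∃ e : ℕ → ℚ × ℚ, Function.Surjective e :=
    ⟨(Denumerable.eqv (ℚ × ℚ)).symm, (Denumerable.eqv (ℚ × ℚ)).symm.surjective⟩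
  have hdef : InDelta a (1/(4*a)) (1/2) := by
    refine ⟨by positivity, by norm_num, by norm_num, ?_⟩
    have : 1/(4*a) * a = 1/4 := by field_simp
    rw [this]; norm_num
  set T : ℕ → ℝ := fun n =>
    if InDelta a ((e n).1 : ℝ) ((e n).2 : ℝ) then ((e n).1 : ℝ) else 1/(4*a) with hT_def
  set S : ℕ → ℝ := fun n =>
    if InDelta a ((e n).1 : ℝ) ((e n).2 : ℝ) then ((e n).2 : ℝ) else 1/2 with hS_def
  have hTS : ∀ n, InDelta a (T n) (S n) := by
    intro n
    by_cases h : InDelta a ((e n).1 : ℝ) ((e n).2 : ℝ)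
    · simpa [hT_def, hS_def, h] using h
    · simpa [hT_def, hS_def, h] using hdef
  have hdense : ∀ τ s : ℝ, InDelta a τ s → ∃ n, τ ≤ T n ∧ s < S n := by
    intro τ s hts
    obtain ⟨hτ0, hs0, hs1, hη⟩ := hts
    set η := 1 - s - τ * a with hη_def
    obtain ⟨r, hr1, hr2⟩ := exists_rat_btwn (show s < s + η/3 by linarith)
    have h3a : (0:ℝ) < η / (3*a) := div_pos (by linarith) (by positivity)
    obtain ⟨p, hp1, hp2⟩ := exists_rat_btwn (show τ < τ + η/(3*a) by linarith)
    have hpa : (p:ℝ) * a < τ * a + η/3 := by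
      have := mul_lt_mul_of_pos_right hp2 ha
      calc (p:ℝ) * a < (τ + η/(3*a)) * a := this
        _ = τ * a + η/3 := by field_simp
    have hInD : InDelta a ((p:ℝ)) ((r:ℝ)) := by
      refine ⟨by linarith, by linarith, by linarith [mul_pos hτ0 ha], by linarith [hpa]⟩
    obtain ⟨n, hn⟩ := he (p, r)
    refine ⟨n, ?_, ?_⟩
    · have : T n = (p:ℝ) := by
        rw [hT_def]; simp only [hn]; rw [if_pos hInD]
      rw [this]; linarith
    · have : S n = (r:ℝ) := by
        rw [hS_def]; simp only [hn]; rw [if_pos hInD]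
      rw [this]; linarith
  -- auxiliary larger level for compactness
  set S' : ℕ → ℝ := fun n => S n + (1 - S n - T n * a)/2 with hS'_def
  have hTS' : ∀ n, InDelta a (T n) (S' n) ∧ S n < S' n := by
    intro n
    obtain ⟨h1, h2, h3, h4⟩ := hTS n
    have hTa : 0 < T n * a := mul_pos h1 ha
    constructor
    · exact ⟨h1, by simp only [hS'_def]; nlinarith, by simp only [hS'_def]; nlinarith,
        by simp only [hS'_def]; nlinarith⟩
    · simp only [hS'_def]; nlinarith
  -- membership of the sequence values
  have humem : ∀ k τ s, InDelta a τ s → ∀ t ∈ Icc (0:ℝ) τ, u k t ∈ E s :=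
    fun k τ s h => ((hG_sub (u k) (hu k)) τ s h).1
  -- countable collection of data points (level, time)
  obtain ⟨dec, hdec⟩ : ∃ dec : ℕ → ℕ × ℕ × ℕ, Function.Surjective dec :=
    ⟨(Denumerable.eqv (ℕ × ℕ × ℕ)).symm, (Denumerable.eqv (ℕ × ℕ × ℕ)).symm.surjective⟩
  set lvl : ℕ → ℕ := fun i => (dec i).1 with hlvl_def
  set tim : ℕ → ℝ :=
    fun i => T (lvl i) * min (((dec i).2.1 : ℝ) / ((dec i).2.2 + 1)) 1 with htim_def
  have htim_mem : ∀ i, tim i ∈ Icc (0:ℝ) (T (lvl i)) := by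
    intro i
    have h1 : 0 < T (lvl i) := (hTS (lvl i)).1
    constructor
    · simp only [htim_def]
      have : (0:ℝ) ≤ min (((dec i).2.1 : ℝ) / ((dec i).2.2 + 1)) 1 :=
        le_min (by positivity) zero_le_one
      positivity
    · simp only [htim_def]
      nlinarith [min_le_right (((dec i).2.1 : ℝ) / ((dec i).2.2 + 1)) (1:ℝ)]
  -- the diagonal extraction
  set P : ℕ → (ℕ → (ℝ → X)) → Prop := fun i y =>
    ∀ ε > (0:ℝ), ∃ K : ℕ, ∀ m ≥ K, ∀ k ≥ K,
      N (S (lvl i)) (y m (tim i) - y k (tim i)) < ε with hP_def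
  have hmono : ∀ i (y : ℕ → ℝ → X) (g : ℕ → ℕ), (∀ k, k ≤ g k) → P i y →
      P i (fun k => y (g k)) := by
    intro i y g hg hPy ε hε
    obtain ⟨K, hK⟩ := hPy ε hε
    exact ⟨K, fun m hm k hk => hK (g m) (le_trans hm (hg m)) (g k) (le_trans hk (hg k))⟩
  have hext : ∀ i (φ : ℕ → ℕ), StrictMono φ → ∃ ψ : ℕ → ℕ, StrictMono ψ ∧
      P i (fun k => u (φ (ψ k))) := by
    intro i φ hφ
    obtain ⟨hInD', hlt⟩ := hTS' (lvl i)
    obtain ⟨M, hM⟩ := hG_bdd (T (lvl i)) (S' (lvl i)) hInD'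
    obtain ⟨h1, h2, h3, h4⟩ := hTS (lvl i)
    obtain ⟨ψ, hψ, l, hlE, hlconv⟩ :=
      hcompact (S (lvl i)) (S' (lvl i)) h2 hlt hInD'.2.2.1
        (fun k => u (φ k) (tim i)) M
        (fun k => humem (φ k) _ _ hInD' (tim i) (htim_mem i))
        (fun k => hM (u (φ k)) (hu _) (tim i) (htim_mem i))
    refine ⟨ψ, hψ, ?_⟩
    intro ε hε
    have hev : ∀ᶠ k in atTop, N (S (lvl i)) (u (φ (ψ k)) (tim i) - l) < ε/2 :=
      hlconv.eventually (gt_mem_nhds (half_pos hε))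
    obtain ⟨K, hK⟩ := eventually_atTop.1 hev
    refine ⟨K, fun m hm k hk => ?_⟩
    have hmem : ∀ j, u (φ (ψ j)) (tim i) ∈ E (S (lvl i)) :=
      fun j => humem _ _ _ (hTS (lvl i)) (tim i) (htim_mem i)
    calc N (S (lvl i)) (u (φ (ψ m)) (tim i) - u (φ (ψ k)) (tim i))
        ≤ N (S (lvl i)) (u (φ (ψ m)) (tim i) - l)
          + N (S (lvl i)) (l - u (φ (ψ k)) (tim i)) :=
          htri _ h2 h3 _ _ _ (hmem m) hlE (hmem k)
      _ = N (S (lvl i)) (u (φ (ψ m)) (tim i) - l)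
          + N (S (lvl i)) (u (φ (ψ k)) (tim i) - l) := by
          rw [hNsub _ h2 h3 l _ hlE (hmem k)]
      _ < ε/2 + ε/2 := add_lt_add (hK m hm) (hK k hk)
      _ = ε := by ring
  obtain ⟨d, hd, hdP⟩ := diag_subseq u P hmono hext
  -- unshifted Cauchy property at every data point
  have hPc : ∀ i, ∀ ε > (0:ℝ), ∃ K : ℕ, ∀ m ≥ K, ∀ k ≥ K,
      N (S (lvl i)) (u (d m) (tim i) - u (d k) (tim i)) < ε := by
    intro i ε hε
    obtain ⟨K, hK⟩ := hdP i ε hε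
    refine ⟨K + i, fun m hm k hk => ?_⟩
    have h1 := hK (m - i) (by omega) (k - i) (by omega)
    simpa only [show m - i + i = m by omega, show k - i + i = k by omega] using h1
  -- uniform Cauchy property on each level
  have hUC : ∀ n, ∀ ε > (0:ℝ), ∃ K : ℕ, ∀ m ≥ K, ∀ k ≥ K, ∀ t ∈ Icc (0:ℝ) (T n),
      N (S n) (u (d m) t - u (d k) t) < ε := by
    intro n ε hε
    obtain ⟨h1, h2, h3, h4⟩ := hTS n
    obtain ⟨δ, hδ, hδ'⟩ := hG_unifCont (ε/3) (by positivity) (T n) (S n) (hTS n)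
    obtain ⟨q, hq⟩ := exists_nat_gt (T n / δ)
    have hq' : T n / (q + 1) < δ := by
      rw [div_lt_iff₀ (by positivity)]
      rw [div_lt_iff₀ hδ] at hq
      nlinarith
    -- Cauchy at each grid point
    have hpoint : ∀ p : ℕ, ∃ K : ℕ, p ≤ q + 1 → ∀ m ≥ K, ∀ k ≥ K,
        N (S n) (u (d m) (T n * ((p:ℝ) / ((q:ℝ)+1))) - u (d k) (T n * ((p:ℝ) / ((q:ℝ)+1)))) < ε/3 := by
      intro p
      by_cases hp : p ≤ q + 1
      · obtain ⟨i, hi⟩ := hdec (n, p, q)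
        have hl : lvl i = n := by simp only [hlvl_def, hi]
        have hmin : min ((p:ℝ) / ((q:ℝ)+1)) 1 = (p:ℝ) / ((q:ℝ)+1) := by
          apply min_eq_left
          rw [div_le_one (by positivity)]
          exact_mod_cast hp
        have htt : tim i = T n * ((p:ℝ) / (q+1)) := by
          simp only [htim_def, hlvl_def, hi, hmin]
        have h0 := hPc i (ε/3) (by positivity)
        rw [hl, htt] at h0
        exact ⟨h0.choose, fun _ => h0.choose_spec⟩
      · exact ⟨0, fun h => absurd h hp⟩
    choose Kf hKf using hpoint
    set K := Finset.sup (Finset.range (q+2)) Kf with hK_def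
    have hKle : ∀ p, p ≤ q + 1 → Kf p ≤ K := by
      intro p h
      exact Finset.le_sup (Finset.mem_range.2 (by omega))
    refine ⟨K, fun m hm k hk t ht => ?_⟩
    set p : ℕ := ⌊t * (q+1) / T n⌋₊ with hp_def
    have ht0 : 0 ≤ t := ht.1
    have htT : t ≤ T n := ht.2
    have harg0 : 0 ≤ t * (q+1) / T n := by positivity
    have hargle : t * (q+1) / T n ≤ q + 1 := by
      rw [div_le_iff₀ h1]
      nlinarith
    have hpq : p ≤ q + 1 := by
      have h5 : (p:ℝ) ≤ q + 1 := le_trans (Nat.floor_le harg0) hargle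
      exact_mod_cast h5
    set tp : ℝ := T n * ((p:ℝ) / (q+1)) with htp_def
    have htpIcc : tp ∈ Icc (0:ℝ) (T n) := by
      constructor
      · rw [htp_def]; positivity
      · rw [htp_def]
        have : (p:ℝ) / (q+1) ≤ 1 := by
          rw [div_le_one (by positivity)]
          exact_mod_cast hpq
        nlinarith
    have hq1 : (0:ℝ) < (q:ℝ) + 1 := by positivity
    have htple : tp ≤ t := by
      have h5 : (p:ℝ) * T n ≤ t * ((q:ℝ)+1) := by
        have h6 : (p:ℝ) ≤ t * ((q:ℝ)+1) / T n := Nat.floor_le harg0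
        rw [le_div_iff₀ h1] at h6
        linarith
      rw [htp_def, ← mul_div_assoc, div_le_iff₀ hq1]
      nlinarith
    have hclose : |t - tp| < δ := by
      have h6 : t * ((q:ℝ)+1) < ((p:ℝ)+1) * T n := by
        have h7 : t * ((q:ℝ)+1) / T n < (p:ℝ) + 1 := by
          rw [hp_def]; exact Nat.lt_floor_add_one _
        rw [div_lt_iff₀ h1] at h7
        linarith
      have h8 : t - tp < δ := by
        have h9 : tp + T n/((q:ℝ)+1) = ((p:ℝ)+1) * T n / ((q:ℝ)+1) := by
          rw [htp_def]; field_simp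
        have h10 : t < tp + T n/((q:ℝ)+1) := by
          rw [h9, lt_div_iff₀ hq1]
          linarith
        linarith [hq']
      rw [abs_lt]
      exact ⟨by linarith, h8⟩
    have hm1 : u (d m) t ∈ E (S n) := humem _ _ _ (hTS n) t ht
    have hm2 : u (d k) t ∈ E (S n) := humem _ _ _ (hTS n) t ht
    have hm3 : u (d m) tp ∈ E (S n) := humem _ _ _ (hTS n) tp htpIcc
    have hm4 : u (d k) tp ∈ E (S n) := humem _ _ _ (hTS n) tp htpIcc
    have hb1 : N (S n) (u (d m) t - u (d m) tp) < ε/3 :=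
      hδ' t ht tp htpIcc hclose (u (d m)) (hu _)
    have hb3 : N (S n) (u (d k) tp - u (d k) t) < ε/3 := by
      have := hδ' t ht tp htpIcc hclose (u (d k)) (hu _)
      rwa [hNsub _ h2 h3 _ _ hm2 hm4] at this
    have hb2 : N (S n) (u (d m) tp - u (d k) tp) < ε/3 := by
      rw [htp_def]
      exact hKf p hpq m (le_trans (hKle p hpq) hm) k (le_trans (hKle p hpq) hk)
    calc N (S n) (u (d m) t - u (d k) t)
        ≤ N (S n) (u (d m) t - u (d m) tp) + N (S n) (u (d m) tp - u (d k) t) :=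
          htri _ h2 h3 _ _ _ hm1 hm3 hm2
      _ ≤ N (S n) (u (d m) t - u (d m) tp)
          + (N (S n) (u (d m) tp - u (d k) tp) + N (S n) (u (d k) tp - u (d k) t)) := by
          linarith [htri _ h2 h3 (u (d m) tp) (u (d k) tp) (u (d k) t) hm3 hm4 hm2]
      _ < ε/3 + (ε/3 + ε/3) := by linarith
      _ = ε := by ring
  -- pointwise limits: definition of `v`
  set v : ℝ → X := fun t => limUnder atTop (fun k => u (d k) t) with hv_def
  have hlim : ∀ n, ∀ t ∈ Icc (0:ℝ) (T n), v t ∈ E (S n) ∧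
      Tendsto (fun k => N (S n) (u (d k) t - v t)) atTop (𝓝 0) := by
    intro n t ht
    obtain ⟨h1, h2, h3, h4⟩ := hTS n
    have hc : ∀ ε > (0:ℝ), ∃ K : ℕ, ∀ m ≥ K, ∀ k ≥ K,
        N (S n) (u (d m) t - u (d k) t) < ε := by
      intro ε hε
      obtain ⟨K, hK⟩ := hUC n ε hε
      exact ⟨K, fun m hm k hk => hK m hm k hk t ht⟩
    obtain ⟨l, hlE, hlconv⟩ := hcomplete (S n) h2 h3 (fun k => u (d k) t)
      (fun k => humem _ _ _ (hTS n) t ht) hc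
    have hX : Tendsto (fun k => u (d k) t) atTop (𝓝 l) := by
      rw [tendsto_iff_norm_sub_tendsto_zero]
      exact squeeze_zero (fun k => norm_nonneg _)
        (fun k => hN_ambient (S n) h2 h3 _
          (sub_mem (humem _ _ _ (hTS n) t ht) hlE)) hlconv
    have hvt : v t = l := by
      rw [hv_def]
      exact hX.limUnder_eq
    rw [hvt]
    exact ⟨hlE, hlconv⟩
  -- uniform convergence on each level
  have hconv : ∀ n, ∀ ε > (0:ℝ), ∃ K : ℕ, ∀ k ≥ K, ∀ t ∈ Icc (0:ℝ) (T n),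
      N (S n) (u (d k) t - v t) < ε := by
    intro n ε hε
    obtain ⟨h1, h2, h3, h4⟩ := hTS n
    obtain ⟨K, hK⟩ := hUC n (ε/2) (half_pos hε)
    refine ⟨K, fun k hk t ht => ?_⟩
    have hev : ∀ᶠ m in atTop, N (S n) (u (d m) t - v t) < ε/2 :=
      ((hlim n t ht).2).eventually (gt_mem_nhds (half_pos hε))
    obtain ⟨K', hK'⟩ := eventually_atTop.1 hev
    have hm1 : u (d k) t ∈ E (S n) := humem _ _ _ (hTS n) t ht
    have hm2 : u (d (max K K')) t ∈ E (S n) := humem _ _ _ (hTS n) t ht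
    have hm3 : v t ∈ E (S n) := (hlim n t ht).1
    calc N (S n) (u (d k) t - v t)
        ≤ N (S n) (u (d k) t - u (d (max K K')) t)
          + N (S n) (u (d (max K K')) t - v t) := htri _ h2 h3 _ _ _ hm1 hm2 hm3
      _ < ε/2 + ε/2 := add_lt_add (hK k hk (max K K') (le_max_left _ _) t ht)
          (hK' (max K K') (le_max_right _ _))
      _ = ε := by ring
  -- main convergence in the scale space
  have hT : TendstoScaleSpace N a (fun k => u (d k)) v := by
    intro τ s hts ε hε
    obtain ⟨n, hτ, hs⟩ := hdense τ s hts
    obtain ⟨K, hK⟩ := hconv n ε hε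
    refine ⟨K, fun k hk t ht => ?_⟩
    have ht' : t ∈ Icc (0:ℝ) (T n) := ⟨ht.1, le_trans ht.2 hτ⟩
    have hmem : u (d k) t - v t ∈ E (S n) :=
      sub_mem (humem _ _ _ (hTS n) t ht') (hlim n t ht').1
    calc N s (u (d k) t - v t) ≤ N (S n) (u (d k) t - v t) :=
        hnorm_mono s (S n) hts.2.1 hs (hTS n).2.2.1 _ hmem
      _ < ε := hK k hk t ht'
  -- `v` belongs to the scale space
  have hvmem : MemScaleSpace E N a v := by
    intro τ s hts
    obtain ⟨n, hτ, hs⟩ := hdense τ s hts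
    have hvm : ∀ t ∈ Icc (0:ℝ) τ, v t ∈ E s := by
      intro t ht
      exact hscale_mono s (S n) hts.2.1 hs (hTS n).2.2.1
        (hlim n t ⟨ht.1, le_trans ht.2 hτ⟩).1
    refine ⟨hvm, ?_⟩
    intro t ht ε hε
    obtain ⟨δ, hδ, hδ'⟩ := hG_unifCont (ε/3) (by positivity) τ s hts
    obtain ⟨K, hK⟩ := hT τ s hts (ε/3) (by positivity)
    refine ⟨δ, hδ, fun t' ht' hdist => ?_⟩
    obtain ⟨hτ0, hs0, hs1, hη⟩ := hts
    have hw1 : v t' ∈ E s := hvm t' ht'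
    have hw2 : u (d K) t' ∈ E s := humem _ _ _ ⟨hτ0, hs0, hs1, hη⟩ t' ht'
    have hw3 : u (d K) t ∈ E s := humem _ _ _ ⟨hτ0, hs0, hs1, hη⟩ t ht
    have hw4 : v t ∈ E s := hvm t ht
    have hb1 : N s (v t' - u (d K) t') < ε/3 := by
      rw [hNsub s hs0 hs1 _ _ hw1 hw2]
      exact hK K le_rfl t' ht'
    have hb2 : N s (u (d K) t' - u (d K) t) < ε/3 :=
      hδ' t' ht' t ht hdist (u (d K)) (hu _)
    have hb3 : N s (u (d K) t - v t) < ε/3 := hK K le_rfl t ht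
    calc N s (v t' - v t)
        ≤ N s (v t' - u (d K) t') + N s (u (d K) t' - v t) :=
          htri s hs0 hs1 _ _ _ hw1 hw2 hw4
      _ ≤ N s (v t' - u (d K) t')
          + (N s (u (d K) t' - u (d K) t) + N s (u (d K) t - v t)) := by
          linarith [htri s hs0 hs1 (u (d K) t') (u (d K) t) (v t) hw2 hw3 hw4]
      _ < ε/3 + (ε/3 + ε/3) := by linarith
      _ = ε := by ring
  exact ⟨d, hd, v, hG_closed (fun k => u (d k)) (fun k => hu _) v hvmem hT, hT⟩
end

section
/- There exists a sufficiently large constant a > 0 such that the problem u_t = h(t,u), u(0) = 0, has a solution u belonging to the intersection over all pairs (τ,s) with τ > 0, 0 < s < 1, 1 − s − τa > 0 (and τ ≤ T) of the spaces C([0,τ], closed ball of radius R in E_s); equivalently, u is continuous with values in the closed ball of radius R of E_s on [0,τ] for every such (τ,s) and satisfies u(t) = ∫_0^t h(ξ,u(ξ)) dξ (as an identity in E_s) for all such t. -/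
open MeasureTheory Filter Topology Set intervalIntegral

/-- Bundled data for the Peano theorem on a scale of Banach spaces. -/
structure PeanoScaleSetup (X : Type*) [NormedAddCommGroup X] [NormedSpace ℝ X]
    [CompleteSpace X] where
  E : ℝ → Submodule ℝ X
  N : ℝ → X → ℝ
  hscale_mono : ∀ s s' : ℝ, 0 < s → s < s' → s' < 1 → E s' ≤ E s
  hnorm_mono : ∀ s s' : ℝ, 0 < s → s < s' → s' < 1 → ∀ x ∈ E s', N s x ≤ N s' x
  hN_nonneg : ∀ s : ℝ, 0 < s → s < 1 → ∀ x ∈ E s, 0 ≤ N s x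
  hN_add : ∀ s : ℝ, 0 < s → s < 1 → ∀ x ∈ E s, ∀ y ∈ E s,
      N s (x + y) ≤ N s x + N s y
  hN_smul : ∀ s : ℝ, 0 < s → s < 1 → ∀ (c : ℝ), ∀ x ∈ E s, N s (c • x) = |c| * N s x
  hN_ambient : ∀ s : ℝ, 0 < s → s < 1 → ∀ x ∈ E s, ‖x‖ ≤ N s x
  hcomplete : ∀ s : ℝ, 0 < s → s < 1 → ∀ u : ℕ → X, (∀ k, u k ∈ E s) →
      (∀ ε > (0:ℝ), ∃ K₀ : ℕ, ∀ m ≥ K₀, ∀ n ≥ K₀, N s (u m - u n) < ε) →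
      ∃ l ∈ E s, Tendsto (fun k => N s (u k - l)) atTop (𝓝 0)
  hcompact : ∀ s s' : ℝ, 0 < s → s < s' → s' < 1 → ∀ (u : ℕ → X) (C : ℝ),
      (∀ k, u k ∈ E s') → (∀ k, N s' (u k) ≤ C) →
      ∃ φ : ℕ → ℕ, StrictMono φ ∧ ∃ l ∈ E s,
        Tendsto (fun k => N s (u (φ k) - l)) atTop (𝓝 0)
  T : ℝ
  R : ℝ
  K : ℝ
  hT : 0 < T
  hR : 0 < R
  hK : 0 < K
  h : ℝ → X → X
  hmaps : ∀ s s' : ℝ, 0 < s → s < s' → s' < 1 → ∀ t ∈ Icc (0:ℝ) T,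
      ∀ u ∈ E s', h t u ∈ E s
  hconth : ∀ s s' : ℝ, 0 < s → s < s' → s' < 1 → ∀ t ∈ Icc (0:ℝ) T,
      ∀ u ∈ E s', ∀ (tk : ℕ → ℝ) (uk : ℕ → X),
        (∀ k, tk k ∈ Icc (0:ℝ) T) → (∀ k, uk k ∈ E s') →
        Tendsto tk atTop (𝓝 t) →
        Tendsto (fun k => N s' (uk k - u)) atTop (𝓝 0) →
        Tendsto (fun k => N s (h (tk k) (uk k) - h t u)) atTop (𝓝 0)
  hboundh : ∀ s s' : ℝ, 0 < s → s < s' → s' < 1 → ∀ t ∈ Icc (0:ℝ) T,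
      ∀ u ∈ E s', N s' u ≤ R → N s (h t u) ≤ K

namespace PeanoScaleSetup

variable {X : Type*} [NormedAddCommGroup X] [NormedSpace ℝ X] [CompleteSpace X]
variable (S : PeanoScaleSetup X)

/-- The common existence time. -/
noncomputable def Ts : ℝ := min S.T (S.R / S.K)

lemma Ts_pos : 0 < S.Ts := lt_min S.hT (div_pos S.hR S.hK)

lemma Ts_le_T : S.Ts ≤ S.T := min_le_left _ _

lemma K_mul_Ts_le_R : S.K * S.Ts ≤ S.R := by
  have h1 : S.Ts ≤ S.R / S.K := min_le_right _ _
  calc S.K * S.Ts ≤ S.K * (S.R / S.K) := by nlinarith [S.hK]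
  _ = S.R := mul_div_cancel₀ _ (ne_of_gt S.hK)

variable {s : ℝ} (hs : 0 < s) (hs1 : s < 1)

section basicN
include hs hs1

lemma N_zero : S.N s 0 = 0 := by
  have := S.hN_smul s hs hs1 0 0 (Submodule.zero_mem _)
  simpa using this

lemma N_neg {x : X} (hx : x ∈ S.E s) : S.N s (-x) = S.N s x := by
  have := S.hN_smul s hs hs1 (-1) x hx
  simpa using this

lemma N_sub_rev {x y : X} (hx : x ∈ S.E s) (hy : y ∈ S.E s) :
    S.N s (x - y) = S.N s (y - x) := by
  have := S.N_neg hs hs1 (Submodule.sub_mem _ hy hx)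
  simpa using this

lemma N_tri {x y z : X} (hx : x ∈ S.E s) (hy : y ∈ S.E s) (hz : z ∈ S.E s) :
    S.N s (x - y) ≤ S.N s (x - z) + S.N s (z - y) := by
  have := S.hN_add s hs hs1 (x - z) (Submodule.sub_mem _ hx hz)
    (z - y) (Submodule.sub_mem _ hz hy)
  simpa using this

lemma N_sum_le (g : ℕ → X) (m : ℕ) (hg : ∀ i < m, g i ∈ S.E s) :
    S.N s (∑ i ∈ Finset.range m, g i) ≤ ∑ i ∈ Finset.range m, S.N s (g i) := by
  induction m with
  | zero => simp [S.N_zero hs hs1]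
  | succ m ih =>
    rw [Finset.sum_range_succ, Finset.sum_range_succ]
    have hg' : ∀ i < m, g i ∈ S.E s := fun i hi => hg i (Nat.lt_succ_of_lt hi)
    calc S.N s (∑ i ∈ Finset.range m, g i + g m)
        ≤ S.N s (∑ i ∈ Finset.range m, g i) + S.N s (g m) :=
          S.hN_add s hs hs1 _ (Submodule.sum_mem _ fun i hi =>
            hg' i (Finset.mem_range.mp hi)) _ (hg m (Nat.lt_succ_self m))
      _ ≤ _ := by linarith [ih hg']

end basicN

include hs hs1 in
/-- Passing an ambient limit through the scale: membership, norm bound, and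
`N s`-convergence for a sequence bounded in a higher space. -/
lemma limpass {s' : ℝ} (hss' : s < s') (hs'1 : s' < 1) {w : ℕ → X} {x : X} {C : ℝ}
    (hmem : ∀ k, w k ∈ S.E s') (hbd : ∀ k, S.N s' (w k) ≤ C)
    (hlim : Tendsto w atTop (𝓝 x)) :
    x ∈ S.E s ∧ S.N s x ≤ C ∧
      Tendsto (fun k => S.N s (w k - x)) atTop (𝓝 0) := by
  have hs'0 : 0 < s' := lt_trans hs hss'
  have hmem' : ∀ k, w k ∈ S.E s := fun k => S.hscale_mono s s' hs hss' hs'1 (hmem k)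
  -- any subsequence has a sub-subsequence converging in N s to the ambient limit
  have main : ∀ ns : ℕ → ℕ, Tendsto ns atTop atTop →
      ∃ ms : ℕ → ℕ, Tendsto (fun k => S.N s (w (ns (ms k)) - x)) atTop (𝓝 (0:ℝ)) := by
    intro ns hns
    obtain ⟨φ, hφ, l, hl, hNl⟩ := S.hcompact s s' hs hss' hs'1 (fun k => w (ns k)) C
      (fun k => hmem (ns k)) (fun k => hbd (ns k))
    have hmemsub : ∀ k, w (ns (φ k)) - l ∈ S.E s := fun k =>
      Submodule.sub_mem _ (hmem' (ns (φ k))) hl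
    have hamb : Tendsto (fun k => w (ns (φ k))) atTop (𝓝 l) := by
      rw [tendsto_iff_norm_sub_tendsto_zero]
      refine squeeze_zero (fun k => norm_nonneg _) (fun k => S.hN_ambient s hs hs1 _ (hmemsub k)) hNl
    have hamb' : Tendsto (fun k => w (ns (φ k))) atTop (𝓝 x) :=
      hlim.comp (hns.comp hφ.tendsto_atTop)
    have hlx : l = x := tendsto_nhds_unique hamb hamb'
    exact ⟨φ, by rwa [hlx] at hNl⟩
  have hNconv : Tendsto (fun k => S.N s (w k - x)) atTop (𝓝 0) :=
    tendsto_of_subseq_tendsto fun ns hns => main ns hns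
  -- membership of x
  obtain ⟨ms, hms⟩ := main id tendsto_id
  obtain ⟨φ, hφ, l, hl, hNl⟩ := S.hcompact s s' hs hss' hs'1 w C hmem hbd
  have hmemsub : ∀ k, w (φ k) - l ∈ S.E s := fun k =>
    Submodule.sub_mem _ (hmem' (φ k)) hl
  have hamb : Tendsto (fun k => w (φ k)) atTop (𝓝 l) := by
    rw [tendsto_iff_norm_sub_tendsto_zero]
    exact squeeze_zero (fun k => norm_nonneg _) (fun k => S.hN_ambient s hs hs1 _ (hmemsub k)) hNl
  have hlx : l = x := tendsto_nhds_unique hamb (hlim.comp hφ.tendsto_atTop)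
  have hxmem : x ∈ S.E s := hlx ▸ hl
  refine ⟨hxmem, ?_, hNconv⟩
  -- norm bound
  have hineq : ∀ k, S.N s x ≤ S.N s (w k - x) + C := by
    intro k
    have h1 : S.N s x ≤ S.N s (x - w k) + S.N s (w k) := by
      have := S.hN_add s hs hs1 (x - w k) (Submodule.sub_mem _ hxmem (hmem' k)) (w k) (hmem' k)
      simpa using this
    have h2 : S.N s (x - w k) = S.N s (w k - x) := S.N_sub_rev hs hs1 hxmem (hmem' k)
    have h3 : S.N s (w k) ≤ C := le_trans (S.hnorm_mono s s' hs hss' hs'1 _ (hmem k)) (hbd k)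
    linarith
  have hlim2 : Tendsto (fun k => S.N s (w k - x) + C) atTop (𝓝 (0 + C)) :=
    hNconv.add tendsto_const_nhds
  have := ge_of_tendsto' hlim2 hineq
  linarith

include hs hs1 in
/-- Sequential continuity in `N s` on a compact interval implies uniform continuity. -/
lemma unif_cont {f : ℝ → X} {A B : ℝ}
    (hmem : ∀ ξ ∈ Icc A B, f ξ ∈ S.E s)
    (hseq : ∀ t ∈ Icc A B, ∀ tk : ℕ → ℝ, (∀ k, tk k ∈ Icc A B) →
      Tendsto tk atTop (𝓝 t) →
      Tendsto (fun k => S.N s (f (tk k) - f t)) atTop (𝓝 0)) :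
    ∀ ε > (0:ℝ), ∃ δ > (0:ℝ), ∀ x ∈ Icc A B, ∀ y ∈ Icc A B,
      |x - y| < δ → S.N s (f x - f y) < ε := by
  by_contra hcon
  push_neg at hcon
  obtain ⟨ε, hε, hbad⟩ := hcon
  have hch : ∀ k : ℕ, ∃ x ∈ Icc A B, ∃ y ∈ Icc A B,
      |x - y| < 1/(k+1) ∧ ε ≤ S.N s (f x - f y) := by
    intro k
    obtain ⟨x, hx, y, hy, hxy, hN⟩ := hbad (1/(k+1)) (by positivity)
    exact ⟨x, hx, y, hy, hxy, hN⟩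
  choose x hxmem y hymem hxy hN using hch
  obtain ⟨a, ha, φ, hφ, hxa⟩ := isCompact_Icc.tendsto_subseq hxmem
  have hya : Tendsto (fun k => y (φ k)) atTop (𝓝 a) := by
    have hdiff : Tendsto (fun k => y (φ k) - x (φ k)) atTop (𝓝 0) := by
      have hb : Tendsto (fun k : ℕ => 1/((φ k : ℝ)+1)) atTop (𝓝 0) := by
        apply Tendsto.comp (g := fun m : ℕ => 1/((m:ℝ)+1)) ?_ hφ.tendsto_atTop
        simpa using tendsto_one_div_add_atTop_nhds_zero_nat (𝕜 := ℝ)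
      refine squeeze_zero_norm (a := fun k : ℕ => 1/((φ k : ℝ)+1)) (fun k => ?_) hb
      exact le_of_lt (by simpa [Real.norm_eq_abs, abs_sub_comm] using hxy (φ k))
    have := hdiff.add hxa
    simpa using this
  have hNx : Tendsto (fun k => S.N s (f (x (φ k)) - f a)) atTop (𝓝 0) :=
    hseq a ha (fun k => x (φ k)) (fun k => hxmem (φ k)) hxa
  have hNy : Tendsto (fun k => S.N s (f (y (φ k)) - f a)) atTop (𝓝 0) :=
    hseq a ha (fun k => y (φ k)) (fun k => hymem (φ k)) hya
  have hub : ∀ k, ε ≤ S.N s (f (x (φ k)) - f a) + S.N s (f (y (φ k)) - f a) := by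
    intro k
    have htri := S.N_tri hs hs1 (hmem _ (hxmem (φ k))) (hmem _ (hymem (φ k))) (hmem a ha)
    have hrev : S.N s (f a - f (y (φ k))) = S.N s (f (y (φ k)) - f a) :=
      S.N_sub_rev hs hs1 (hmem a ha) (hmem _ (hymem (φ k)))
    have := hN (φ k)
    linarith
  have hlim : Tendsto (fun k => S.N s (f (x (φ k)) - f a) + S.N s (f (y (φ k)) - f a))
      atTop (𝓝 (0+0)) := hNx.add hNy
  have := ge_of_tendsto' hlim hub
  linarith

include hs hs1 in
/-- Uniform `N s`-continuity implies ambient continuity on the interval. -/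
lemma contOn_of_unif {f : ℝ → X} {A B : ℝ}
    (hmem : ∀ ξ ∈ Icc A B, f ξ ∈ S.E s)
    (hu : ∀ ε > (0:ℝ), ∃ δ > (0:ℝ), ∀ x ∈ Icc A B, ∀ y ∈ Icc A B,
      |x - y| < δ → S.N s (f x - f y) < ε) :
    ContinuousOn f (Icc A B) := by
  intro t ht
  rw [Metric.continuousWithinAt_iff]
  intro ε hε
  obtain ⟨δ, hδ, hδ'⟩ := hu ε hε
  refine ⟨δ, hδ, fun y hy hyd => ?_⟩
  have h1 : |y - t| < δ := by rwa [Real.dist_eq] at hyd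
  have h2 : S.N s (f y - f t) < ε := hδ' y hy t ht h1
  calc dist (f y) (f t) = ‖f y - f t‖ := dist_eq_norm _ _
    _ ≤ S.N s (f y - f t) := S.hN_ambient s hs hs1 _ (Submodule.sub_mem _ (hmem y hy) (hmem t ht))
    _ < ε := h2

lemma sum_range_add'' {β : Type*} [AddCommMonoid β] (g : ℕ → β) (a b : ℕ) :
    ∑ j ∈ Finset.range (a+b), g j
      = ∑ j ∈ Finset.range a, g j + ∑ l ∈ Finset.range b, g (a+l) := by
  induction b with
  | zero => simp
  | succ b ih => rw [← Nat.add_assoc, Finset.sum_range_succ, ih, Finset.sum_range_succ, add_assoc]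

lemma sum_range_mul'' {β : Type*} [AddCommMonoid β] (g : ℕ → β) (M r : ℕ) :
    ∑ j ∈ Finset.range (M*r), g j
      = ∑ i ∈ Finset.range M, ∑ l ∈ Finset.range r, g (i*r + l) := by
  induction M with
  | zero => simp
  | succ M ih => rw [Nat.succ_mul, sum_range_add'', ih, Finset.sum_range_succ]

include hs hs1 in
/-- The interval integral of a scale-valued, bounded, uniformly `N s`-continuous
function belongs to `E s`, with the natural bound. -/
lemma integral_mem {f : ℝ → X} {A B KB : ℝ} (hAB : A ≤ B) (hKB : 0 ≤ KB)
    (hmem : ∀ ξ ∈ Icc A B, f ξ ∈ S.E s)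
    (hbd : ∀ ξ ∈ Icc A B, S.N s (f ξ) ≤ KB)
    (hu : ∀ ε > (0:ℝ), ∃ δ > (0:ℝ), ∀ x ∈ Icc A B, ∀ y ∈ Icc A B,
      |x - y| < δ → S.N s (f x - f y) < ε) :
    (∫ ξ in A..B, f ξ) ∈ S.E s ∧ S.N s (∫ ξ in A..B, f ξ) ≤ KB * (B - A) := by
  rcases eq_or_lt_of_le hAB with heq | hlt
  · rw [← heq]
    simp [intervalIntegral.integral_same, S.N_zero hs hs1, Submodule.zero_mem]
  obtain ⟨L, hLdef⟩ : ∃ L : ℝ, L = B - A := ⟨_, rfl⟩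
  have hL : 0 < L := by rw [hLdef]; linarith
  have hcont : ContinuousOn f (Icc A B) := S.contOn_of_unif hs hs1 hmem hu
  have hint : IntervalIntegrable f volume A B := hcont.intervalIntegrable_of_Icc hAB
  obtain ⟨z, hzdef⟩ : ∃ z : ℕ → ℕ → ℝ,
      z = fun (M i : ℕ) => A + (i:ℝ) * (L / M) := ⟨_, rfl⟩
  have hzmem : ∀ M i : ℕ, M ≠ 0 → (i:ℝ) ≤ (M:ℝ) → z M i ∈ Icc A B := by
    intro M i hM hiM
    have hMpos : (0:ℝ) < M := by
      have := Nat.pos_of_ne_zero hM; exact_mod_cast this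
    have hLM : (0:ℝ) ≤ L / M := div_nonneg hL.le hMpos.le
    constructor
    · have : (0:ℝ) ≤ (i:ℝ) * (L / M) := mul_nonneg (Nat.cast_nonneg i) hLM
      simp only [hzdef]; linarith
    · have h1 : (i:ℝ) * (L / M) ≤ (M:ℝ) * (L / M) :=
        mul_le_mul_of_nonneg_right hiM hLM
      have h2 : (M:ℝ) * (L / M) = L := by field_simp
      rw [h2] at h1
      simp only [hzdef]
      simp only [hLdef] at h1 ⊢
      linarith
  have hzmem' : ∀ M i : ℕ, i < M → z M i ∈ Icc A B := by
    intro M i hi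
    exact hzmem M i (by omega) (by exact_mod_cast le_of_lt hi)
  obtain ⟨Rs, hRdef⟩ : ∃ Rs : ℕ → X,
      Rs = fun M : ℕ => ∑ i ∈ Finset.range M, (L/(M:ℝ)) • f (z M i) := ⟨_, rfl⟩
  have hRmem : ∀ M, Rs M ∈ S.E s := by
    intro M
    rw [hRdef]
    exact Submodule.sum_mem _ fun i hi =>
      Submodule.smul_mem _ _ (hmem _ (hzmem' M i (Finset.mem_range.mp hi)))
  have hRbd : ∀ M, S.N s (Rs M) ≤ KB * L := by
    intro M
    rcases Nat.eq_zero_or_pos M with rfl | hM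
    · simp only [hRdef, Finset.range_zero, Finset.sum_empty, S.N_zero hs hs1]
      exact mul_nonneg hKB hL.le
    have hMpos : (0:ℝ) < M := by exact_mod_cast hM
    have hLM : (0:ℝ) ≤ L / M := div_nonneg hL.le hMpos.le
    rw [hRdef]
    calc S.N s (∑ i ∈ Finset.range M, (L/(M:ℝ)) • f (z M i))
        ≤ ∑ i ∈ Finset.range M, S.N s ((L/(M:ℝ)) • f (z M i)) :=
          S.N_sum_le hs hs1 _ M fun i hi =>
            Submodule.smul_mem _ _ (hmem _ (hzmem' M i hi))
      _ ≤ ∑ _i ∈ Finset.range M, (L/(M:ℝ)) * KB := by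
          apply Finset.sum_le_sum
          intro i hi
          rw [S.hN_smul s hs hs1 _ _ (hmem _ (hzmem' M i (Finset.mem_range.mp hi)))]
          rw [abs_of_nonneg hLM]
          exact mul_le_mul_of_nonneg_left (hbd _ (hzmem' M i (Finset.mem_range.mp hi))) hLM
      _ = (M:ℝ) * ((L/M) * KB) := by
          rw [Finset.sum_const, Finset.card_range, nsmul_eq_mul]
      _ = KB * L := by field_simp
  -- refinement estimate
  have refine_est : ∀ ε > (0:ℝ), ∃ δ > (0:ℝ), ∀ M r : ℕ, 1 ≤ M → 1 ≤ r →
      L/M < δ → S.N s (Rs M - Rs (M*r)) ≤ L * ε := by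
    intro ε hε
    obtain ⟨δ, hδ, hδ'⟩ := hu ε hε
    refine ⟨δ, hδ, fun M r hM hr hMδ => ?_⟩
    have hMpos : (0:ℝ) < M := by exact_mod_cast hM
    have hrpos : (0:ℝ) < r := by exact_mod_cast hr
    have hMr : (0:ℝ) < (M:ℝ) * r := mul_pos hMpos hrpos
    have hLMr : (0:ℝ) ≤ L / ((M:ℝ)*r) := div_nonneg hL.le hMr.le
    have hcastMr : ((M*r : ℕ) : ℝ) = (M:ℝ) * r := by push_cast; ring
    have hidx : ∀ i l : ℕ, i < M → l < r → i*r + l < M*r := by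
      intro i l hi hl
      calc i*r + l < i*r + r := Nat.add_lt_add_left hl _
        _ = (i+1)*r := by ring
        _ ≤ M*r := Nat.mul_le_mul_right _ hi
    have hnode : ∀ i l : ℕ, i < M → l < r →
        z M i - z (M*r) (i*r + l) = -((l:ℝ) * (L/((M:ℝ)*r))) := by
      intro i l hi hl
      simp only [hzdef, hcastMr]
      push_cast
      field_simp
      ring
    have hclose : ∀ i l : ℕ, i < M → l < r →
        S.N s (f (z M i) - f (z (M*r) (i*r+l))) < ε := by
      intro i l hi hl
      apply hδ' _ (hzmem' M i hi) _ (hzmem' (M*r) _ (hidx i l hi hl))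
      rw [hnode i l hi hl, abs_neg,
        abs_of_nonneg (mul_nonneg (Nat.cast_nonneg l) hLMr)]
      calc (l:ℝ) * (L/((M:ℝ)*r)) < (r:ℝ) * (L/((M:ℝ)*r)) := by
            apply mul_lt_mul_of_pos_right _ (div_pos hL hMr)
            exact_mod_cast hl
        _ = L/M := by field_simp
        _ < δ := hMδ
    have hsplit : Rs (M*r) = ∑ i ∈ Finset.range M, ∑ l ∈ Finset.range r,
        (L/((M:ℝ)*r)) • f (z (M*r) (i*r+l)) := by
      rw [hRdef]
      simp only [hcastMr]
      exact sum_range_mul'' _ M r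
    have hRsM : Rs M = ∑ i ∈ Finset.range M, ∑ l ∈ Finset.range r,
        (L/((M:ℝ)*r)) • f (z M i) := by
      rw [hRdef]
      apply Finset.sum_congr rfl
      intro i _
      rw [Finset.sum_const, Finset.card_range, ← Nat.cast_smul_eq_nsmul ℝ, smul_smul]
      congr 1
      field_simp
    have hmem2 : ∀ i l : ℕ, i < M → l < r →
        f (z M i) - f (z (M*r) (i*r+l)) ∈ S.E s := fun i l hi hl =>
      Submodule.sub_mem _ (hmem _ (hzmem' M i hi)) (hmem _ (hzmem' _ _ (hidx i l hi hl)))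
    have hdiff : Rs M - Rs (M*r) = ∑ i ∈ Finset.range M, ∑ l ∈ Finset.range r,
        (L/((M:ℝ)*r)) • (f (z M i) - f (z (M*r) (i*r+l))) := by
      rw [hRsM, hsplit, ← Finset.sum_sub_distrib]
      apply Finset.sum_congr rfl
      intro i _
      rw [← Finset.sum_sub_distrib]
      apply Finset.sum_congr rfl
      intro l _
      rw [smul_sub]
    rw [hdiff]
    calc S.N s (∑ i ∈ Finset.range M, ∑ l ∈ Finset.range r,
            (L/((M:ℝ)*r)) • (f (z M i) - f (z (M*r) (i*r+l))))
        ≤ ∑ i ∈ Finset.range M, S.N s (∑ l ∈ Finset.range r,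
            (L/((M:ℝ)*r)) • (f (z M i) - f (z (M*r) (i*r+l)))) := by
          apply S.N_sum_le hs hs1
          intro i hi
          exact Submodule.sum_mem _ fun l hl =>
            Submodule.smul_mem _ _ (hmem2 i l hi (Finset.mem_range.mp hl))
      _ ≤ ∑ i ∈ Finset.range M, ∑ l ∈ Finset.range r, (L/((M:ℝ)*r)) * ε := by
          apply Finset.sum_le_sum
          intro i hi
          calc S.N s (∑ l ∈ Finset.range r,
                (L/((M:ℝ)*r)) • (f (z M i) - f (z (M*r) (i*r+l))))
              ≤ ∑ l ∈ Finset.range r, S.N s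
                ((L/((M:ℝ)*r)) • (f (z M i) - f (z (M*r) (i*r+l)))) := by
                apply S.N_sum_le hs hs1
                intro l hl
                exact Submodule.smul_mem _ _ (hmem2 i l (Finset.mem_range.mp hi) hl)
            _ ≤ ∑ l ∈ Finset.range r, (L/((M:ℝ)*r)) * ε := by
                apply Finset.sum_le_sum
                intro l hl
                rw [S.hN_smul s hs hs1 _ _
                  (hmem2 i l (Finset.mem_range.mp hi) (Finset.mem_range.mp hl))]
                rw [abs_of_nonneg hLMr]
                exact mul_le_mul_of_nonneg_left
                  (le_of_lt (hclose i l (Finset.mem_range.mp hi) (Finset.mem_range.mp hl)))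
                  hLMr
      _ = L * ε := by
          simp only [Finset.sum_const, Finset.card_range, nsmul_eq_mul]
          field_simp
  -- Cauchy property of the Riemann sums
  have hcauchy : ∀ ε > (0:ℝ), ∃ K₀ : ℕ, ∀ m ≥ K₀, ∀ n ≥ K₀,
      S.N s (Rs m - Rs n) < ε := by
    intro ε hε
    have h3L : (0:ℝ) < 3*L := by linarith
    have hε3 : (0:ℝ) < ε/(3*L) := div_pos hε h3L
    obtain ⟨δ, hδ, hδ'⟩ := refine_est (ε/(3*L)) hε3
    obtain ⟨n₀, hn₀⟩ := exists_nat_gt (L/δ)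
    refine ⟨max n₀ 1, fun m hm n hn => ?_⟩
    have hm1 : 1 ≤ m := le_trans (le_max_right _ _) hm
    have hn1 : 1 ≤ n := le_trans (le_max_right _ _) hn
    have hLdelta : ∀ p : ℕ, max n₀ 1 ≤ p → L/p < δ := by
      intro p hp
      have hppos : (0:ℝ) < p := by
        have : 1 ≤ p := le_trans (le_max_right _ _) hp
        exact_mod_cast this
      rw [div_lt_iff₀ hppos]
      rw [div_lt_iff₀ hδ] at hn₀
      have h2 : (n₀:ℝ) ≤ p := by exact_mod_cast le_trans (le_max_left _ _) hp
      nlinarith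
    have e1 : S.N s (Rs m - Rs (m*n)) ≤ L * (ε/(3*L)) :=
      hδ' m n hm1 hn1 (hLdelta m hm)
    have e2 : S.N s (Rs (m*n) - Rs n) ≤ L * (ε/(3*L)) := by
      rw [S.N_sub_rev hs hs1 (hRmem _) (hRmem _), Nat.mul_comm]
      exact hδ' n m hn1 hm1 (hLdelta n hn)
    have e3 : S.N s (Rs m - Rs n) ≤ S.N s (Rs m - Rs (m*n)) + S.N s (Rs (m*n) - Rs n) :=
      S.N_tri hs hs1 (hRmem m) (hRmem n) (hRmem (m*n))
    have e4 : L * (ε/(3*L)) = ε/3 := by field_simp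
    rw [e4] at e1 e2
    linarith
  obtain ⟨l, hl, hNl⟩ := S.hcomplete s hs hs1 Rs hRmem hcauchy
  have hambl : Tendsto Rs atTop (𝓝 l) := by
    rw [tendsto_iff_norm_sub_tendsto_zero]
    exact squeeze_zero (fun k => norm_nonneg _)
      (fun k => S.hN_ambient s hs hs1 _ (Submodule.sub_mem _ (hRmem k) hl)) hNl
  -- ambient convergence of the Riemann sums to the integral
  have hambI : Tendsto Rs atTop (𝓝 (∫ ξ in A..B, f ξ)) := by
    rw [NormedAddCommGroup.tendsto_atTop]
    intro ε hε
    have h2L : (0:ℝ) < 2*L := by linarith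
    have hε2 : (0:ℝ) < ε/(2*L) := div_pos hε h2L
    obtain ⟨δ, hδ, hδ'⟩ := hu (ε/(2*L)) hε2
    obtain ⟨n₀, hn₀⟩ := exists_nat_gt (L/δ)
    refine ⟨max n₀ 1, fun M hM => ?_⟩
    have hM1 : 1 ≤ M := le_trans (le_max_right _ _) hM
    have hMpos : (0:ℝ) < M := by exact_mod_cast hM1
    have hLM : (0:ℝ) ≤ L / M := div_nonneg hL.le hMpos.le
    have hMδ : L/M < δ := by
      rw [div_lt_iff₀ hMpos]
      rw [div_lt_iff₀ hδ] at hn₀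
      have h2 : (n₀:ℝ) ≤ M := by exact_mod_cast le_trans (le_max_left _ _) hM
      nlinarith
    have hnodeIcc : ∀ i : ℕ, i ≤ M → z M i ∈ Icc A B := fun i hi =>
      hzmem M i (by omega) (by exact_mod_cast hi)
    have hstep : ∀ i : ℕ, z M (i+1) - z M i = L/M := by
      intro i
      simp only [hzdef]
      push_cast
      ring
    have hord : ∀ i : ℕ, z M i ≤ z M (i+1) := by
      intro i
      have h1 := hstep i
      linarith
    have hpieceint : ∀ i : ℕ, i < M →
        IntervalIntegrable f volume (z M i) (z M (i+1)) := by
      intro i hi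
      apply hint.mono_set
      apply uIcc_subset_uIcc
      · rw [uIcc_of_le hAB]; exact hnodeIcc i (le_of_lt hi)
      · rw [uIcc_of_le hAB]; exact hnodeIcc (i+1) hi
    have hz0 : z M 0 = A := by simp [hzdef]
    have hzM : z M M = B := by
      have h2 : (M:ℝ) * (L / M) = L := by field_simp
      simp only [hzdef]
      rw [h2, hLdef]
      ring
    have hpart : ∑ i ∈ Finset.range M, ∫ ξ in (z M i)..(z M (i+1)), f ξ
        = ∫ ξ in A..B, f ξ := by
      have := intervalIntegral.sum_integral_adjacent_intervals
        (a := z M) (μ := volume) (f := f) (n := M) (fun k hk => hpieceint k hk)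
      rwa [hz0, hzM] at this
    have hterm : ∀ i ∈ Finset.range M,
        ‖(L/(M:ℝ)) • f (z M i) - ∫ ξ in (z M i)..(z M (i+1)), f ξ‖
          ≤ (ε/(2*L)) * (L/M) := by
      intro i hi
      have hi' := Finset.mem_range.mp hi
      have hconst : (L/(M:ℝ)) • f (z M i) = ∫ _ξ in (z M i)..(z M (i+1)), f (z M i) := by
        rw [intervalIntegral.integral_const]
        congr 1
        have := hstep i
        linarith
      rw [hconst, ← intervalIntegral.integral_sub intervalIntegrable_const (hpieceint i hi')]
      have hb : ∀ ξ ∈ Set.uIoc (z M i) (z M (i+1)), ‖f (z M i) - f ξ‖ ≤ ε/(2*L) := by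
        intro ξ hξ
        rw [uIoc_of_le (hord i)] at hξ
        have hξIcc : ξ ∈ Icc A B :=
          ⟨le_trans (hnodeIcc i (le_of_lt hi')).1 (le_of_lt hξ.1),
           le_trans hξ.2 (hnodeIcc (i+1) hi').2⟩
        have hdist : |z M i - ξ| < δ := by
          rw [abs_sub_comm, abs_of_pos (by linarith [hξ.1])]
          have h1 := hξ.2
          have h2 := hstep i
          linarith
        have hN := hδ' _ (hnodeIcc i (le_of_lt hi')) ξ hξIcc hdist
        have hamb := S.hN_ambient s hs hs1 _
          (Submodule.sub_mem _ (hmem _ (hnodeIcc i (le_of_lt hi'))) (hmem _ hξIcc))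
        linarith
      have hnb := intervalIntegral.norm_integral_le_of_norm_le_const hb
      calc ‖∫ ξ in (z M i)..(z M (i+1)), (f (z M i) - f ξ)‖
          ≤ (ε/(2*L)) * |z M (i+1) - z M i| := hnb
        _ = (ε/(2*L)) * (L/M) := by
            rw [hstep i, abs_of_nonneg hLM]
    have hsum : ‖Rs M - ∫ ξ in A..B, f ξ‖ ≤ (M:ℝ) * ((ε/(2*L)) * (L/M)) := by
      have h1 : Rs M - ∫ ξ in A..B, f ξ = ∑ i ∈ Finset.range M,
          ((L/(M:ℝ)) • f (z M i) - ∫ ξ in (z M i)..(z M (i+1)), f ξ) := by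
        rw [Finset.sum_sub_distrib, hpart, hRdef]
      rw [h1]
      calc ‖∑ i ∈ Finset.range M,
            ((L/(M:ℝ)) • f (z M i) - ∫ ξ in (z M i)..(z M (i+1)), f ξ)‖
          ≤ ∑ i ∈ Finset.range M,
            ‖(L/(M:ℝ)) • f (z M i) - ∫ ξ in (z M i)..(z M (i+1)), f ξ‖ := norm_sum_le _ _
        _ ≤ ∑ _i ∈ Finset.range M, (ε/(2*L)) * (L/M) := Finset.sum_le_sum hterm
        _ = (M:ℝ) * ((ε/(2*L)) * (L/M)) := by
            rw [Finset.sum_const, Finset.card_range, nsmul_eq_mul]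
    have hfin : (M:ℝ) * ((ε/(2*L)) * (L/M)) = ε/2 := by field_simp
    rw [hfin] at hsum
    linarith
  have hlI : l = ∫ ξ in A..B, f ξ := tendsto_nhds_unique hambl hambI
  rw [← hlI]
  refine ⟨hl, ?_⟩
  have hineq : ∀ k, S.N s l ≤ S.N s (Rs k - l) + KB * L := by
    intro k
    have h1 : S.N s l ≤ S.N s (l - Rs k) + S.N s (Rs k) := by
      have := S.hN_add s hs hs1 (l - Rs k) (Submodule.sub_mem _ hl (hRmem k)) (Rs k) (hRmem k)
      simpa using this
    have h2 : S.N s (l - Rs k) = S.N s (Rs k - l) := S.N_sub_rev hs hs1 hl (hRmem k)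
    linarith [hRbd k]
  have hlim2 : Tendsto (fun k => S.N s (Rs k - l) + KB * L) atTop (𝓝 (0 + KB * L)) :=
    hNl.add tendsto_const_nhds
  have hfin := ge_of_tendsto' hlim2 hineq
  rw [hLdef] at hfin
  linarith

/-- Clamp to `[0, Ts]`. -/
noncomputable def clamp (t : ℝ) : ℝ := min (max t 0) S.Ts

/-- Delayed clamped time. -/
noncomputable def capped (δ t : ℝ) : ℝ := min (max (t - δ) 0) S.Ts

lemma clamp_mem (t : ℝ) : S.clamp t ∈ Icc (0:ℝ) S.Ts :=
  ⟨le_min (le_max_right _ _) S.Ts_pos.le, min_le_right _ _⟩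

lemma clamp_eq {t : ℝ} (ht : t ∈ Icc (0:ℝ) S.Ts) : S.clamp t = t := by
  rw [clamp, max_eq_left ht.1, min_eq_left ht.2]

lemma capped_mem (δ t : ℝ) : S.capped δ t ∈ Icc (0:ℝ) S.Ts :=
  ⟨le_min (le_max_right _ _) S.Ts_pos.le, min_le_right _ _⟩

lemma capped_le_clamp {δ : ℝ} (hδ : 0 < δ) (t : ℝ) : S.capped δ t ≤ S.clamp t := by
  apply min_le_min _ le_rfl
  apply max_le_max _ le_rfl
  linarith

lemma capped_lip (δ t t' : ℝ) : |S.capped δ t - S.capped δ t'| ≤ |t - t'| := by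
  have l1 : LipschitzWith 1 (fun x : ℝ => x - δ) :=
    LipschitzWith.of_dist_le_mul (fun x y => by
      simp [Real.dist_eq, sub_sub_sub_cancel_right])
  have l2 : LipschitzWith 1 (fun x : ℝ => min (max (x - δ) 0) S.Ts) :=
    by simpa using (l1.max_const 0).min_const S.Ts
  have := l2.dist_le_mul t t'
  simpa [capped, Real.dist_eq] using this

/-- The delayed approximations. -/
noncomputable def approx (δ : ℝ) : ℕ → ℝ → X
  | 0 => fun _ => 0
  | (j+1) => fun t => ∫ ξ in (0:ℝ)..(S.capped δ t), S.h ξ (approx δ j ξ)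

/-- Invariant satisfied by all approximations. -/
def IsGood (f : ℝ → X) : Prop :=
  ∀ s : ℝ, 0 < s → s < 1 →
    (∀ t, f t ∈ S.E s) ∧
    (∀ t, S.N s (f t) ≤ S.K * S.clamp t) ∧
    (∀ t t', S.N s (f t - f t') ≤ S.K * |t - t'|)

lemma good_zero : S.IsGood (fun _ => 0) := by
  intro s hs hs1
  refine ⟨fun t => Submodule.zero_mem _, fun t => ?_, fun t t' => ?_⟩
  · rw [S.N_zero hs hs1]
    exact mul_nonneg S.hK.le (S.clamp_mem t).1
  · simp only [sub_zero, S.N_zero hs hs1]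
    exact mul_nonneg S.hK.le (abs_nonneg _)

lemma good_comp {f : ℝ → X} (hf : S.IsGood f) {s : ℝ} (hs : 0 < s) (hs1 : s < 1) :
    (∀ ξ ∈ Icc (0:ℝ) S.Ts, S.h ξ (f ξ) ∈ S.E s ∧ S.N s (S.h ξ (f ξ)) ≤ S.K) ∧
    (∀ ε > (0:ℝ), ∃ δ > (0:ℝ), ∀ x ∈ Icc (0:ℝ) S.Ts, ∀ y ∈ Icc (0:ℝ) S.Ts,
      |x - y| < δ → S.N s (S.h x (f x) - S.h y (f y)) < ε) ∧
    ContinuousOn (fun ξ => S.h ξ (f ξ)) (Icc (0:ℝ) S.Ts) := by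
  set s' : ℝ := (1+s)/2 with hs'def
  have hs'0 : 0 < s' := by rw [hs'def]; linarith
  have hss' : s < s' := by rw [hs'def]; linarith
  have hs'1 : s' < 1 := by rw [hs'def]; linarith
  obtain ⟨hfmem, hfbd, hflip⟩ := hf s' hs'0 hs'1
  have hIccT : ∀ ξ ∈ Icc (0:ℝ) S.Ts, ξ ∈ Icc (0:ℝ) S.T := fun ξ hξ =>
    ⟨hξ.1, le_trans hξ.2 S.Ts_le_T⟩
  have hfR : ∀ ξ ∈ Icc (0:ℝ) S.Ts, S.N s' (f ξ) ≤ S.R := by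
    intro ξ hξ
    calc S.N s' (f ξ) ≤ S.K * S.clamp ξ := hfbd ξ
      _ ≤ S.K * S.Ts := mul_le_mul_of_nonneg_left (S.clamp_mem ξ).2 S.hK.le
      _ ≤ S.R := S.K_mul_Ts_le_R
  have hgmem : ∀ ξ ∈ Icc (0:ℝ) S.Ts, S.h ξ (f ξ) ∈ S.E s ∧ S.N s (S.h ξ (f ξ)) ≤ S.K := by
    intro ξ hξ
    exact ⟨S.hmaps s s' hs hss' hs'1 ξ (hIccT ξ hξ) _ (hfmem ξ),
      S.hboundh s s' hs hss' hs'1 ξ (hIccT ξ hξ) _ (hfmem ξ) (hfR ξ hξ)⟩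
  have hseq : ∀ t ∈ Icc (0:ℝ) S.Ts, ∀ tk : ℕ → ℝ, (∀ k, tk k ∈ Icc (0:ℝ) S.Ts) →
      Tendsto tk atTop (𝓝 t) →
      Tendsto (fun k => S.N s (S.h (tk k) (f (tk k)) - S.h t (f t))) atTop (𝓝 0) := by
    intro t ht tk htk hconv
    apply S.hconth s s' hs hss' hs'1 t (hIccT t ht) (f t) (hfmem t) tk (fun k => f (tk k))
      (fun k => hIccT _ (htk k)) (fun k => hfmem _) hconv
    have habs : Tendsto (fun k => S.K * |tk k - t|) atTop (𝓝 0) := by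
      have h1 : Tendsto (fun k => tk k - t) atTop (𝓝 0) := by
        simpa using hconv.sub_const t
      have h2 : Tendsto (fun k => |tk k - t|) atTop (𝓝 0) := by
        simpa using h1.abs
      simpa using h2.const_mul S.K
    apply squeeze_zero (fun k => S.hN_nonneg s' hs'0 hs'1 _
      (Submodule.sub_mem _ (hfmem _) (hfmem _))) (fun k => hflip _ _) habs
  have huc : ∀ ε > (0:ℝ), ∃ δ > (0:ℝ), ∀ x ∈ Icc (0:ℝ) S.Ts, ∀ y ∈ Icc (0:ℝ) S.Ts,
      |x - y| < δ → S.N s (S.h x (f x) - S.h y (f y)) < ε :=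
    S.unif_cont hs hs1 (fun ξ hξ => (hgmem ξ hξ).1) hseq
  exact ⟨hgmem, huc, S.contOn_of_unif hs hs1 (fun ξ hξ => (hgmem ξ hξ).1) huc⟩

lemma good_step {f : ℝ → X} (hf : S.IsGood f) {δ : ℝ} (hδ : 0 < δ) :
    S.IsGood (fun t => ∫ ξ in (0:ℝ)..(S.capped δ t), S.h ξ (f ξ)) := by
  intro s hs hs1
  obtain ⟨hgmem, huc, hcont⟩ := S.good_comp hf hs hs1
  have hsub : ∀ a b : ℝ, a ∈ Icc (0:ℝ) S.Ts → b ∈ Icc (0:ℝ) S.Ts →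
      ∀ ξ ∈ Icc a b, ξ ∈ Icc (0:ℝ) S.Ts := fun a b ha hb ξ hξ =>
    ⟨le_trans ha.1 hξ.1, le_trans hξ.2 hb.2⟩
  have hucsub : ∀ a b : ℝ, a ∈ Icc (0:ℝ) S.Ts → b ∈ Icc (0:ℝ) S.Ts →
      ∀ ε > (0:ℝ), ∃ δ' > (0:ℝ), ∀ x ∈ Icc a b, ∀ y ∈ Icc a b,
        |x - y| < δ' → S.N s (S.h x (f x) - S.h y (f y)) < ε := by
    intro a b ha hb ε hε
    obtain ⟨δ', hδ', hd⟩ := huc ε hε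
    exact ⟨δ', hδ', fun x hx y hy hxy =>
      hd x (hsub a b ha hb x hx) y (hsub a b ha hb y hy) hxy⟩
  have hImem : ∀ a b : ℝ, a ≤ b → a ∈ Icc (0:ℝ) S.Ts → b ∈ Icc (0:ℝ) S.Ts →
      (∫ ξ in a..b, S.h ξ (f ξ)) ∈ S.E s ∧
        S.N s (∫ ξ in a..b, S.h ξ (f ξ)) ≤ S.K * (b - a) := by
    intro a b hab ha hb
    exact S.integral_mem hs hs1 hab S.hK.le
      (fun ξ hξ => (hgmem ξ (hsub a b ha hb ξ hξ)).1)
      (fun ξ hξ => (hgmem ξ (hsub a b ha hb ξ hξ)).2)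
      (hucsub a b ha hb)
  have hzeroIcc : (0:ℝ) ∈ Icc (0:ℝ) S.Ts := ⟨le_rfl, S.Ts_pos.le⟩
  have hFmem : ∀ t, (∫ ξ in (0:ℝ)..(S.capped δ t), S.h ξ (f ξ)) ∈ S.E s ∧
      S.N s (∫ ξ in (0:ℝ)..(S.capped δ t), S.h ξ (f ξ)) ≤ S.K * S.capped δ t := by
    intro t
    have := hImem 0 (S.capped δ t) (S.capped_mem δ t).1 hzeroIcc (S.capped_mem δ t)
    simpa using this
  have hint : ∀ a b : ℝ, a ∈ Icc (0:ℝ) S.Ts → b ∈ Icc (0:ℝ) S.Ts →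
      IntervalIntegrable (fun ξ => S.h ξ (f ξ)) volume a b := by
    intro a b ha hb
    apply ContinuousOn.intervalIntegrable
    apply hcont.mono
    have hsubI : uIcc a b ⊆ uIcc (0:ℝ) S.Ts := uIcc_subset_uIcc
      (by rw [uIcc_of_le S.Ts_pos.le]; exact ha)
      (by rw [uIcc_of_le S.Ts_pos.le]; exact hb)
    rwa [uIcc_of_le S.Ts_pos.le] at hsubI
  refine ⟨fun t => (hFmem t).1, fun t => ?_, ?_⟩
  · calc S.N s (∫ ξ in (0:ℝ)..(S.capped δ t), S.h ξ (f ξ)) ≤ S.K * S.capped δ t :=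
        (hFmem t).2
      _ ≤ S.K * S.clamp t := mul_le_mul_of_nonneg_left (S.capped_le_clamp hδ t) S.hK.le
  · have key : ∀ t t' : ℝ, S.capped δ t' ≤ S.capped δ t →
        S.N s ((∫ ξ in (0:ℝ)..(S.capped δ t), S.h ξ (f ξ)) -
          ∫ ξ in (0:ℝ)..(S.capped δ t'), S.h ξ (f ξ)) ≤ S.K * |t - t'| := by
      intro t t' hle
      have hi1 : IntervalIntegrable (fun ξ => S.h ξ (f ξ)) volume 0 (S.capped δ t) :=
        hint 0 _ hzeroIcc (S.capped_mem δ t)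
      have hi2 : IntervalIntegrable (fun ξ => S.h ξ (f ξ)) volume 0 (S.capped δ t') :=
        hint 0 _ hzeroIcc (S.capped_mem δ t')
      rw [intervalIntegral.integral_interval_sub_left hi1 hi2]
      have hmm := hImem (S.capped δ t') (S.capped δ t) hle
        (S.capped_mem δ t') (S.capped_mem δ t)
      calc S.N s (∫ ξ in (S.capped δ t')..(S.capped δ t), S.h ξ (f ξ))
          ≤ S.K * (S.capped δ t - S.capped δ t') := hmm.2
        _ ≤ S.K * |t - t'| := by
            apply mul_le_mul_of_nonneg_left _ S.hK.le
            calc S.capped δ t - S.capped δ t' ≤ |S.capped δ t - S.capped δ t'| := le_abs_self _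
              _ ≤ |t - t'| := S.capped_lip δ t t'
    intro t t'
    rcases le_total (S.capped δ t') (S.capped δ t) with hc | hc
    · exact key t t' hc
    · rw [S.N_sub_rev hs hs1 (hFmem t).1 (hFmem t').1, abs_sub_comm]
      exact key t' t hc

lemma approx_good {δ : ℝ} (hδ : 0 < δ) : ∀ j, S.IsGood (S.approx δ j) := by
  intro j
  induction j with
  | zero => exact S.good_zero
  | succ j ih =>
    have := S.good_step ih hδ
    simpa [approx] using this

lemma approx_agree {δ : ℝ} (hδ : 0 < δ) :
    ∀ j : ℕ, ∀ t ≤ ((j:ℝ)+1)*δ, S.approx δ (j+1) t = S.approx δ j t := by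
  intro j
  induction j with
  | zero =>
    intro t ht
    have hc : S.capped δ t = 0 := by
      rw [capped]
      rw [max_eq_right (by push_cast at ht; linarith)]
      rw [min_eq_left S.Ts_pos.le]
    show (∫ ξ in (0:ℝ)..(S.capped δ t), S.h ξ (S.approx δ 0 ξ)) = _
    rw [hc, intervalIntegral.integral_same]
    rfl
  | succ j ih =>
    intro t ht
    show (∫ ξ in (0:ℝ)..(S.capped δ t), S.h ξ (S.approx δ (j+1) ξ))
      = ∫ ξ in (0:ℝ)..(S.capped δ t), S.h ξ (S.approx δ j ξ)
    apply intervalIntegral.integral_congr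
    intro ξ hξ
    rw [uIcc_of_le (S.capped_mem δ t).1] at hξ
    have hξle : ξ ≤ ((j:ℝ)+1)*δ := by
      have h1 : ξ ≤ S.capped δ t := hξ.2
      have h2 : S.capped δ t ≤ max (t - δ) 0 := min_le_left _ _
      have h3 : max (t - δ) 0 ≤ ((j:ℝ)+1)*δ := by
        apply max_le _ (mul_nonneg (by positivity) hδ.le)
        push_cast at ht
        linarith
      linarith
    simp only [ih ξ hξle]

/-- The approximating sequence. -/
noncomputable def U (n : ℕ) : ℝ → X := S.approx (S.Ts/(n+1)) (n+1)

lemma delta_pos (n : ℕ) : 0 < S.Ts/((n:ℝ)+1) := div_pos S.Ts_pos (by positivity)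

lemma U_good (n : ℕ) : S.IsGood (S.U n) := S.approx_good (S.delta_pos n) (n+1)

lemma U_eq (n : ℕ) (t : ℝ) :
    S.U n t = ∫ ξ in (0:ℝ)..(S.capped (S.Ts/(n+1)) t), S.h ξ (S.U n ξ) := by
  show (∫ ξ in (0:ℝ)..(S.capped (S.Ts/(n+1)) t), S.h ξ (S.approx (S.Ts/(n+1)) n ξ)) = _
  apply intervalIntegral.integral_congr
  intro ξ hξ
  rw [uIcc_of_le (S.capped_mem _ t).1] at hξ
  have hξle : ξ ≤ ((n:ℝ)+1)*(S.Ts/(n+1)) := by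
    have h1 : ξ ≤ S.capped (S.Ts/(n+1)) t := hξ.2
    have h2 : S.capped (S.Ts/(n+1)) t ≤ S.Ts := (S.capped_mem _ t).2
    have h3 : ((n:ℝ)+1)*(S.Ts/(n+1)) = S.Ts := by field_simp
    linarith
  simp only [U]
  rw [S.approx_agree (S.delta_pos n) n ξ hξle]

lemma U_zero (n : ℕ) : S.U n 0 = 0 := by
  rw [U_eq]
  have hc : S.capped (S.Ts/(n+1)) 0 = 0 := by
    rw [capped, max_eq_right (by linarith [S.delta_pos n]), min_eq_left S.Ts_pos.le]
  rw [hc, intervalIntegral.integral_same]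

/-- Abstract diagonal argument: if along every subsequence each of countably many
sequences admits a convergent further subsequence, there is a single subsequence
along which all of them converge. -/
lemma diagonal_subseq {α : Type*} [TopologicalSpace α] (V : ℕ → ℕ → α)
    (hext : ∀ (m : ℕ) (ψ : ℕ → ℕ), ∃ θ : ℕ → ℕ, StrictMono θ ∧
      ∃ x : α, Tendsto (fun k => V m (ψ (θ k))) atTop (𝓝 x)) :
    ∃ φ : ℕ → ℕ, StrictMono φ ∧ ∀ m, ∃ x, Tendsto (fun k => V m (φ k)) atTop (𝓝 x) := by
  choose θf hθm xf hxc using hext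
  set g : ℕ → ℕ → ℕ := fun m => Nat.rec (motive := fun _ => ℕ → ℕ)
    (θf 0 id) (fun m' prev => prev ∘ θf (m'+1) prev) m with hgdef
  have hgs : ∀ m, g (m+1) = g m ∘ θf (m+1) (g m) := fun m => rfl
  have hgmono : ∀ m, StrictMono (g m) := by
    intro m
    induction m with
    | zero => exact hθm 0 id
    | succ m ih => exact ih.comp (hθm (m+1) (g m))
  have hgconv : ∀ m, ∃ x, Tendsto (fun k => V m (g m k)) atTop (𝓝 x) := by
    intro m
    cases m with
    | zero => exact ⟨xf 0 id, hxc 0 id⟩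
    | succ m => exact ⟨xf (m+1) (g m), hxc (m+1) (g m)⟩
  have hsub : ∀ m p : ℕ, ∃ σ : ℕ → ℕ, StrictMono σ ∧ g (m + p) = g m ∘ σ := by
    intro m p
    induction p with
    | zero => exact ⟨id, strictMono_id, rfl⟩
    | succ p ih =>
      obtain ⟨σ, hσ, hge⟩ := ih
      refine ⟨σ ∘ θf (m+p+1) (g (m+p)), hσ.comp (hθm _ _), ?_⟩
      have : g (m + (p+1)) = g (m+p) ∘ θf (m+p+1) (g (m+p)) := hgs (m+p)
      rw [this, hge]
      rfl
  refine ⟨fun k => g k k, ?_, ?_⟩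
  · apply strictMono_nat_of_lt_succ
    intro k
    show g k k < g (k+1) (k+1)
    rw [hgs k]
    exact hgmono k (lt_of_lt_of_le (Nat.lt_succ_self k) (hθm (k+1) (g k)).le_apply)
  · intro m
    obtain ⟨x, hx⟩ := hgconv m
    refine ⟨x, ?_⟩
    choose σf hσmono hσeq using hsub m
    have hφmono : StrictMono (fun k : ℕ => g k k) := by
      apply strictMono_nat_of_lt_succ
      intro k
      show g k k < g (k+1) (k+1)
      rw [hgs k]
      exact hgmono k (lt_of_lt_of_le (Nat.lt_succ_self k) (hθm (k+1) (g k)).le_apply)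
    set ρ : ℕ → ℕ := fun k => if h : m ≤ k then σf (k - m) k else 0 with hρdef
    have hval : ∀ k, m ≤ k → g k k = g m (ρ k) := by
      intro k hk
      simp only [hρdef, dif_pos hk]
      have h1 := hσeq (k - m)
      have h2 : m + (k - m) = k := Nat.add_sub_cancel' hk
      calc g k k = g (m + (k-m)) k := by rw [h2]
        _ = g m (σf (k-m) k) := by rw [h1]; rfl
    have hρtop : Tendsto ρ atTop atTop := by
      rw [tendsto_atTop_atTop]
      intro b
      refine ⟨max m (g m b), fun k hk => ?_⟩
      have hk1 : m ≤ k := le_trans (le_max_left _ _) hk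
      have hk2 : g m b ≤ k := le_trans (le_max_right _ _) hk
      have h3 : g m b ≤ g k k := le_trans hk2 hφmono.le_apply
      rw [hval k hk1] at h3
      exact (hgmono m).le_iff_le.mp h3
    have hcomp : Tendsto (fun k => V m (g m (ρ k))) atTop (𝓝 x) := hx.comp hρtop
    apply Filter.Tendsto.congr' _ hcomp
    filter_upwards [eventually_ge_atTop m] with k hk
    exact congrArg (V m) (hval k hk).symm

lemma U_amb_lip (n : ℕ) (t t' : ℝ) : ‖S.U n t - S.U n t'‖ ≤ S.K * |t - t'| := by
  obtain ⟨hmem, _, hlip⟩ := S.U_good n (1/2) (by norm_num) (by norm_num)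
  exact le_trans (S.hN_ambient (1/2) (by norm_num) (by norm_num) _
    (Submodule.sub_mem _ (hmem t) (hmem t'))) (hlip t t')

lemma exists_diag : ∃ φ : ℕ → ℕ, StrictMono φ ∧
    ∀ t : ℝ, ∃ x : X, Tendsto (fun k => S.U (φ k) t) atTop (𝓝 x) := by
  have hpoint : ∀ (t : ℝ) (ψ : ℕ → ℕ), ∃ θ : ℕ → ℕ, StrictMono θ ∧
      ∃ x : X, Tendsto (fun k => S.U (ψ (θ k)) t) atTop (𝓝 x) := by
    intro t ψ
    have hg := fun n => S.U_good n (3/4) (by norm_num) (by norm_num)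
    have hmem : ∀ n (t' : ℝ), S.U n t' ∈ S.E (3/4) := fun n => (hg n).1
    have hbd : ∀ n (t' : ℝ), S.N (3/4) (S.U n t') ≤ S.K * S.clamp t' := fun n => (hg n).2.1
    have hC : ∀ k : ℕ, S.N (3/4) (S.U (ψ k) t) ≤ S.K * S.Ts := by
      intro k
      exact le_trans (hbd (ψ k) t)
        (mul_le_mul_of_nonneg_left (S.clamp_mem t).2 S.hK.le)
    obtain ⟨θ, hθ, l, hl, hNl⟩ := S.hcompact (1/2) (3/4) (by norm_num) (by norm_num)
      (by norm_num) (fun k => S.U (ψ k) t) (S.K * S.Ts) (fun k => hmem (ψ k) t) hC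
    refine ⟨θ, hθ, l, ?_⟩
    rw [tendsto_iff_norm_sub_tendsto_zero]
    apply squeeze_zero (fun k => norm_nonneg _) (fun k => ?_) hNl
    exact S.hN_ambient (1/2) (by norm_num) (by norm_num) _
      (Submodule.sub_mem _
        (S.hscale_mono (1/2) (3/4) (by norm_num) (by norm_num) (by norm_num) (hmem _ t)) hl)
  set q : ℕ → ℝ := TopologicalSpace.denseSeq ℝ with hqdef
  have hq : DenseRange q := TopologicalSpace.denseRange_denseSeq ℝ
  obtain ⟨φ, hφ, hconv⟩ := diagonal_subseq (fun m n => S.U n (q m))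
    (fun m ψ => hpoint (q m) ψ)
  refine ⟨φ, hφ, fun t => ?_⟩
  have hcs : CauchySeq (fun k => S.U (φ k) t) := by
    rw [Metric.cauchySeq_iff]
    intro ε hε
    have hKpos : (0:ℝ) < S.K := S.hK
    obtain ⟨m, hm⟩ := hq.exists_dist_lt t (show (0:ℝ) < ε/(8*(S.K+1)) by positivity)
    obtain ⟨x, hx⟩ := hconv m
    have hxcs : CauchySeq (fun k => S.U (φ k) (q m)) := hx.cauchySeq
    rw [Metric.cauchySeq_iff] at hxcs
    obtain ⟨N, hN⟩ := hxcs (ε/2) (by positivity)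
    refine ⟨N, fun a ha b hb => ?_⟩
    have hqt : |q m - t| < ε/(8*(S.K+1)) := by
      rw [← Real.dist_eq]
      rw [dist_comm]
      exact hm
    have h1 : dist (S.U (φ a) t) (S.U (φ a) (q m)) ≤ S.K * |t - q m| := by
      rw [dist_eq_norm]; exact S.U_amb_lip (φ a) t (q m)
    have h2 : dist (S.U (φ b) (q m)) (S.U (φ b) t) ≤ S.K * |q m - t| := by
      rw [dist_eq_norm]; exact S.U_amb_lip (φ b) (q m) t
    have h3 := hN a ha b hb
    have habs : |t - q m| = |q m - t| := abs_sub_comm _ _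
    have hbound : S.K * |q m - t| ≤ S.K * (ε/(8*(S.K+1))) :=
      mul_le_mul_of_nonneg_left hqt.le S.hK.le
    have hsmall : S.K * (ε/(8*(S.K+1))) ≤ ε/8 := by
      have hpos : (0:ℝ) < ε/(8*(S.K+1)) := by positivity
      calc S.K * (ε/(8*(S.K+1))) ≤ (S.K+1) * (ε/(8*(S.K+1))) :=
            mul_le_mul_of_nonneg_right (by linarith) hpos.le
        _ = ε/8 := by field_simp
    calc dist (S.U (φ a) t) (S.U (φ b) t)
        ≤ dist (S.U (φ a) t) (S.U (φ a) (q m)) +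
          dist (S.U (φ a) (q m)) (S.U (φ b) (q m)) +
          dist (S.U (φ b) (q m)) (S.U (φ b) t) := dist_triangle4 _ _ _ _
      _ < ε := by
          rw [habs] at h1
          linarith
  exact cauchySeq_tendsto_of_complete hcs

/-- Main existence result, in bundled form. -/
lemma main : ∃ a > (0:ℝ), ∃ u : ℝ → X, u 0 = 0 ∧
    ∀ τ s : ℝ, 0 < τ → τ ≤ S.T → 0 < s → s < 1 → 1 - s - τ * a > 0 →
      (∀ t ∈ Icc (0:ℝ) τ, u t ∈ S.E s ∧ S.N s (u t) ≤ S.R) ∧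
      (∀ t ∈ Icc (0:ℝ) τ, ∀ ε > (0:ℝ), ∃ δ > (0:ℝ), ∀ t' ∈ Icc (0:ℝ) τ,
        |t' - t| < δ → S.N s (u t' - u t) < ε) ∧
      (∀ t ∈ Icc (0:ℝ) τ,
        IntervalIntegrable (fun ξ => S.h ξ (u ξ)) volume 0 t ∧
        u t = ∫ ξ in (0:ℝ)..t, S.h ξ (u ξ)) := by
  obtain ⟨φ, hφ, hconv⟩ := S.exists_diag
  choose u hu using hconv
  -- limit facts
  have limfacts : ∀ s s' : ℝ, 0 < s → s < s' → s' < 1 → ∀ t : ℝ,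
      u t ∈ S.E s ∧ S.N s (u t) ≤ S.K * S.clamp t ∧
        Tendsto (fun k => S.N s (S.U (φ k) t - u t)) atTop (𝓝 0) := by
    intro s s' hs hss' hs'1 t
    have hs'0 : 0 < s' := lt_trans hs hss'
    have hg := fun n => S.U_good n s' hs'0 hs'1
    exact S.limpass hs (lt_trans hss' hs'1) hss' hs'1
      (fun k => (hg (φ k)).1 t) (fun k => (hg (φ k)).2.1 t) (hu t)
  have liplim : ∀ s s' : ℝ, 0 < s → s < s' → s' < 1 → ∀ t t' : ℝ,
      S.N s (u t - u t') ≤ S.K * |t - t'| := by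
    intro s s' hs hss' hs'1 t t'
    have hs'0 : 0 < s' := lt_trans hs hss'
    have hg := fun n => S.U_good n s' hs'0 hs'1
    have := S.limpass hs (lt_trans hss' hs'1) hss' hs'1
      (w := fun k => S.U (φ k) t - S.U (φ k) t') (C := S.K * |t - t'|)
      (fun k => Submodule.sub_mem _ ((hg (φ k)).1 t) ((hg (φ k)).1 t'))
      (fun k => (hg (φ k)).2.2 t t') ((hu t).sub (hu t'))
    exact this.2.1
  have midp : ∀ s : ℝ, 0 < s → s < 1 → 0 < (1+s)/2 ∧ s < (1+s)/2 ∧ (1+s)/2 < 1 := by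
    intro s hs hs1
    refine ⟨by linarith, by linarith, by linarith⟩
  have hugood : S.IsGood u := by
    intro s hs hs1
    obtain ⟨m1, m2, m3⟩ := midp s hs hs1
    exact ⟨fun t => (limfacts s _ hs m2 m3 t).1,
      fun t => (limfacts s _ hs m2 m3 t).2.1,
      fun t t' => liplim s _ hs m2 m3 t t'⟩
  have hu0 : u 0 = 0 := by
    have h1 : Tendsto (fun k => S.U (φ k) 0) atTop (𝓝 (0:X)) := by
      have : (fun k => S.U (φ k) 0) = fun _ => (0:X) := by
        funext k; exact S.U_zero (φ k)
      rw [this]; exact tendsto_const_nhds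
    exact tendsto_nhds_unique (hu 0) h1
  refine ⟨S.K/S.R, div_pos S.hK S.hR, u, hu0, ?_⟩
  intro τ s hτ hτT hs hs1 hsmall
  have hKτR : S.K * τ ≤ S.R := by
    have h1 : τ * (S.K/S.R) < 1 := by nlinarith [hs]
    rw [← mul_div_assoc] at h1
    have h2 := (div_lt_one S.hR).mp h1
    linarith
  have hτTs : τ ≤ S.Ts := by
    apply le_min hτT
    rw [le_div_iff₀ S.hK]
    linarith
  have hsubτ : ∀ t ∈ Icc (0:ℝ) τ, t ∈ Icc (0:ℝ) S.Ts := fun t ht =>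
    ⟨ht.1, le_trans ht.2 hτTs⟩
  obtain ⟨m1, m2, m3⟩ := midp s hs hs1
  have part1 : ∀ t ∈ Icc (0:ℝ) τ, u t ∈ S.E s ∧ S.N s (u t) ≤ S.R := by
    intro t ht
    obtain ⟨hmem, hbd, _⟩ := limfacts s _ hs m2 m3 t
    refine ⟨hmem, le_trans hbd ?_⟩
    rw [S.clamp_eq (hsubτ t ht)]
    calc S.K * t ≤ S.K * τ := mul_le_mul_of_nonneg_left ht.2 S.hK.le
      _ ≤ S.R := hKτR
  refine ⟨part1, ?_, ?_⟩
  · -- continuity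
    intro t ht ε hε
    have hεK : (0:ℝ) < ε/(S.K+1) := div_pos hε (by linarith [S.hK])
    refine ⟨ε/(S.K+1), hεK, fun t' ht' hd => ?_⟩
    have h1 := liplim s _ hs m2 m3 t' t
    have h2 : S.K * |t' - t| < S.K * (ε/(S.K+1)) := mul_lt_mul_of_pos_left hd S.hK
    have h3 : S.K * (ε/(S.K+1)) < ε := by
      calc S.K * (ε/(S.K+1)) < (S.K+1) * (ε/(S.K+1)) :=
            mul_lt_mul_of_pos_right (by linarith) hεK
        _ = ε := by
            rw [← mul_div_assoc]
            exact mul_div_cancel_left₀ ε (ne_of_gt (by linarith [S.hK]))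
    linarith
  · -- integral equation
    intro t ht
    obtain ⟨hgmem, hguc, hgcont⟩ := S.good_comp hugood hs hs1
    have htTs : t ∈ Icc (0:ℝ) S.Ts := hsubτ t ht
    have hgint : IntervalIntegrable (fun ξ => S.h ξ (u ξ)) volume 0 t := by
      apply ContinuousOn.intervalIntegrable_of_Icc ht.1
      exact hgcont.mono (fun ξ hξ => ⟨hξ.1, le_trans hξ.2 htTs.2⟩)
    refine ⟨hgint, ?_⟩
    have hFk := fun k : ℕ => S.good_comp (S.U_good (φ k)) hs hs1
    have hIsub : ∀ ξ, ξ ∈ Set.uIoc (0:ℝ) t → ξ ∈ Icc (0:ℝ) S.Ts := by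
      intro ξ hξ
      rw [uIoc_of_le ht.1] at hξ
      exact ⟨hξ.1.le, le_trans hξ.2 htTs.2⟩
    have hIccT : ∀ ξ : ℝ, ξ ∈ Icc (0:ℝ) S.Ts → ξ ∈ Icc (0:ℝ) S.T := fun ξ hξ =>
      ⟨hξ.1, le_trans hξ.2 S.Ts_le_T⟩
    have hdct : Tendsto (fun k => ∫ ξ in (0:ℝ)..t, S.h ξ (S.U (φ k) ξ)) atTop
        (𝓝 (∫ ξ in (0:ℝ)..t, S.h ξ (u ξ))) := by
      apply intervalIntegral.tendsto_integral_filter_of_dominated_convergence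
        (bound := fun _ => S.K)
      · apply Eventually.of_forall
        intro k
        apply ContinuousOn.aestronglyMeasurable _ measurableSet_uIoc
        exact (hFk k).2.2.mono hIsub
      · apply Eventually.of_forall
        intro k
        apply ae_of_all
        intro ξ hξ
        have h5 := (hFk k).1 ξ (hIsub ξ hξ)
        exact le_trans (S.hN_ambient s hs hs1 _ h5.1) h5.2
      · exact intervalIntegrable_const
      · apply ae_of_all
        intro ξ hξ
        have hξT := hIsub ξ hξ
        have hNconv : Tendsto (fun k => S.N ((1+s)/2) (S.U (φ k) ξ - u ξ)) atTop (𝓝 0) := by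
          have q1 : (0:ℝ) < (1+s)/2 := m1
          have q2 : (1+s)/2 < (3+s)/4 := by linarith
          have q3 : (3+s)/4 < 1 := by linarith
          exact (limfacts ((1+s)/2) ((3+s)/4) q1 q2 q3 ξ).2.2
        have hN2 : Tendsto (fun k => S.N s (S.h ξ (S.U (φ k) ξ) - S.h ξ (u ξ)))
            atTop (𝓝 0) :=
          S.hconth s ((1+s)/2) hs m2 m3 ξ (hIccT ξ hξT) (u ξ)
            ((hugood ((1+s)/2) m1 m3).1 ξ) (fun _ => ξ) (fun k => S.U (φ k) ξ)
            (fun k => hIccT ξ hξT) (fun k => (S.U_good (φ k) ((1+s)/2) m1 m3).1 ξ)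
            tendsto_const_nhds hNconv
        rw [tendsto_iff_norm_sub_tendsto_zero]
        exact squeeze_zero (fun k => norm_nonneg _)
          (fun k => S.hN_ambient s hs hs1 _
            (Submodule.sub_mem _ ((hFk k).1 ξ hξT).1 ((hgmem ξ hξT).1))) hN2
    have herr : ∀ k, S.U (φ k) t = (∫ ξ in (0:ℝ)..t, S.h ξ (S.U (φ k) ξ)) -
        ∫ ξ in (S.capped (S.Ts/(φ k+1)) t)..t, S.h ξ (S.U (φ k) ξ) := by
      intro k
      have hcmem := S.capped_mem (S.Ts/(φ k+1)) t
      have hi1 : IntervalIntegrable (fun ξ => S.h ξ (S.U (φ k) ξ)) volume 0 t :=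
        ContinuousOn.intervalIntegrable_of_Icc ht.1
          ((hFk k).2.2.mono (fun ξ hξ => ⟨hξ.1, le_trans hξ.2 htTs.2⟩))
      have hi2 : IntervalIntegrable (fun ξ => S.h ξ (S.U (φ k) ξ)) volume 0
          (S.capped (S.Ts/(φ k+1)) t) :=
        ContinuousOn.intervalIntegrable_of_Icc hcmem.1
          ((hFk k).2.2.mono (fun ξ hξ => ⟨hξ.1, le_trans hξ.2 hcmem.2⟩))
      have hsub := intervalIntegral.integral_interval_sub_left hi1 hi2
      rw [S.U_eq (φ k) t, ← hsub]
      abel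
    have hcle : ∀ k : ℕ, S.capped (S.Ts/(φ k+1)) t ≤ t ∧
        t - S.capped (S.Ts/(φ k+1)) t ≤ S.Ts/(φ k+1) := by
      intro k
      have hδk := S.delta_pos (φ k)
      constructor
      · apply min_le_of_left_le
        apply max_le (by linarith [hδk]) ht.1
      · have h1 : t - S.Ts/(φ k+1) ≤ max (t - S.Ts/(φ k+1)) 0 := le_max_left _ _
        have h2 : t - S.Ts/(φ k+1) ≤ S.Ts := by linarith [htTs.2, hδk]
        have h3 : t - S.Ts/(φ k+1) ≤ S.capped (S.Ts/(φ k+1)) t := le_min h1 h2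
        linarith
    have herrnorm : ∀ k : ℕ,
        ‖∫ ξ in (S.capped (S.Ts/(φ k+1)) t)..t, S.h ξ (S.U (φ k) ξ)‖
          ≤ S.K * (S.Ts/(k+1)) := by
      intro k
      have hcmem := S.capped_mem (S.Ts/(φ k+1)) t
      have hb : ∀ ξ ∈ Set.uIoc (S.capped (S.Ts/(φ k+1)) t) t, ‖S.h ξ (S.U (φ k) ξ)‖ ≤ S.K := by
        intro ξ hξ
        rw [uIoc_of_le (hcle k).1] at hξ
        have hξT : ξ ∈ Icc (0:ℝ) S.Ts := ⟨le_trans hcmem.1 hξ.1.le, le_trans hξ.2 htTs.2⟩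
        have h5 := (hFk k).1 ξ hξT
        exact le_trans (S.hN_ambient s hs hs1 _ h5.1) h5.2
      have hnb := intervalIntegral.norm_integral_le_of_norm_le_const hb
      have habs : |t - S.capped (S.Ts/(φ k+1)) t| ≤ S.Ts/((k:ℝ)+1) := by
        rw [abs_of_nonneg (by linarith [(hcle k).1])]
        calc t - S.capped (S.Ts/(φ k+1)) t ≤ S.Ts/(φ k+1) := (hcle k).2
          _ ≤ S.Ts/((k:ℝ)+1) := by
              apply div_le_div_of_nonneg_left S.Ts_pos.le (by positivity)
              have : (k:ℝ) ≤ φ k := by exact_mod_cast hφ.le_apply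
              linarith
      calc ‖∫ ξ in (S.capped (S.Ts/(φ k+1)) t)..t, S.h ξ (S.U (φ k) ξ)‖
          ≤ S.K * |t - S.capped (S.Ts/(φ k+1)) t| := hnb
        _ ≤ S.K * (S.Ts/((k:ℝ)+1)) := mul_le_mul_of_nonneg_left habs S.hK.le
    have herr0 : Tendsto (fun k =>
        ∫ ξ in (S.capped (S.Ts/(φ k+1)) t)..t, S.h ξ (S.U (φ k) ξ)) atTop (𝓝 0) := by
      apply squeeze_zero_norm herrnorm
      have h1 := tendsto_one_div_add_atTop_nhds_zero_nat.const_mul (S.K * S.Ts)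
      rw [mul_zero] at h1
      apply h1.congr
      intro k
      ring
    have hfinal : Tendsto (fun k => S.U (φ k) t) atTop
        (𝓝 ((∫ ξ in (0:ℝ)..t, S.h ξ (u ξ)) - 0)) := by
      apply (hdct.sub herr0).congr
      intro k
      exact (herr k).symm
    rw [sub_zero] at hfinal
    exact tendsto_nhds_unique (hu t) hfinal

end PeanoScaleSetup

/-- **Peano existence theorem on a scale of Banach spaces** (the special case `A ≡ 0`
of the abstract Cauchy–Kowalewski theorem).

The scale `{(E_s, ‖·‖_s)}_{0<s<1}` is modeled inside an ambient Banach space `X`: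
`E s` is a submodule of `X` and `N s` its norm, with `E_{s'} ⊆ E_s`, `N s ≤ N s'`
for `0 < s < s' < 1`, each `(E_s, N s)` complete, each embedding `E_{s'} ↪ E_s`
compact, and the ambient norm dominated by the scale norms.

The mapping `h : [0,T] × E_{s'} → E_s` is (sequentially) continuous and satisfies
`‖h(t,u)‖_s ≤ K` on the closed `R`-ball.

Conclusion: there is a (large) constant `a > 0` and a solution of `u_t = h(t,u)`,
`u(0) = 0`, continuous on `[0,τ]` with values in the closed `R`-ball of `E_s` and
satisfying `u(t) = ∫₀ᵗ h(ξ,u(ξ)) dξ` for every `(τ,s)` with `τ > 0`, `τ ≤ T`,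
`0 < s < 1`, `1 - s - τa > 0` and `t ∈ [0,τ]`. -/
theorem peano_on_banach_scale
    {X : Type*} [NormedAddCommGroup X] [NormedSpace ℝ X] [CompleteSpace X]
    (E : ℝ → Submodule ℝ X) (N : ℝ → X → ℝ)
    -- the scale structure
    (hscale_mono : ∀ s s' : ℝ, 0 < s → s < s' → s' < 1 → E s' ≤ E s)
    (hnorm_mono : ∀ s s' : ℝ, 0 < s → s < s' → s' < 1 → ∀ x ∈ E s', N s x ≤ N s' x)
    (hN_nonneg : ∀ s : ℝ, 0 < s → s < 1 → ∀ x ∈ E s, 0 ≤ N s x)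
    (hN_def : ∀ s : ℝ, 0 < s → s < 1 → ∀ x ∈ E s, (N s x = 0 ↔ x = 0))
    (hN_add : ∀ s : ℝ, 0 < s → s < 1 → ∀ x ∈ E s, ∀ y ∈ E s,
      N s (x + y) ≤ N s x + N s y)
    (hN_smul : ∀ s : ℝ, 0 < s → s < 1 → ∀ (c : ℝ), ∀ x ∈ E s, N s (c • x) = |c| * N s x)
    (hN_ambient : ∀ s : ℝ, 0 < s → s < 1 → ∀ x ∈ E s, ‖x‖ ≤ N s x)
    (hcomplete : ∀ s : ℝ, 0 < s → s < 1 → ∀ u : ℕ → X, (∀ k, u k ∈ E s) →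
      (∀ ε > (0:ℝ), ∃ K₀ : ℕ, ∀ m ≥ K₀, ∀ n ≥ K₀, N s (u m - u n) < ε) →
      ∃ l ∈ E s, Tendsto (fun k => N s (u k - l)) atTop (𝓝 0))
    (hcompact : ∀ s s' : ℝ, 0 < s → s < s' → s' < 1 → ∀ (u : ℕ → X) (C : ℝ),
      (∀ k, u k ∈ E s') → (∀ k, N s' (u k) ≤ C) →
      ∃ φ : ℕ → ℕ, StrictMono φ ∧ ∃ l ∈ E s,
        Tendsto (fun k => N s (u (φ k) - l)) atTop (𝓝 0))
    -- the data of the problem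
    (T R K : ℝ) (hT : 0 < T) (hR : 0 < R) (hK : 0 < K)
    (h : ℝ → X → X)
    (hmaps : ∀ s s' : ℝ, 0 < s → s < s' → s' < 1 → ∀ t ∈ Icc (0:ℝ) T,
      ∀ u ∈ E s', h t u ∈ E s)
    (hconth : ∀ s s' : ℝ, 0 < s → s < s' → s' < 1 → ∀ t ∈ Icc (0:ℝ) T,
      ∀ u ∈ E s', ∀ (tk : ℕ → ℝ) (uk : ℕ → X),
        (∀ k, tk k ∈ Icc (0:ℝ) T) → (∀ k, uk k ∈ E s') →
        Tendsto tk atTop (𝓝 t) →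
        Tendsto (fun k => N s' (uk k - u)) atTop (𝓝 0) →
        Tendsto (fun k => N s (h (tk k) (uk k) - h t u)) atTop (𝓝 0))
    (hboundh : ∀ s s' : ℝ, 0 < s → s < s' → s' < 1 → ∀ t ∈ Icc (0:ℝ) T,
      ∀ u ∈ E s', N s' u ≤ R → N s (h t u) ≤ K) :
    ∃ a > (0:ℝ), ∃ u : ℝ → X, u 0 = 0 ∧
      ∀ τ s : ℝ, 0 < τ → τ ≤ T → 0 < s → s < 1 → 1 - s - τ * a > 0 →
        (∀ t ∈ Icc (0:ℝ) τ, u t ∈ E s ∧ N s (u t) ≤ R) ∧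
        (∀ t ∈ Icc (0:ℝ) τ, ∀ ε > (0:ℝ), ∃ δ > (0:ℝ), ∀ t' ∈ Icc (0:ℝ) τ,
          |t' - t| < δ → N s (u t' - u t) < ε) ∧
        (∀ t ∈ Icc (0:ℝ) τ,
          IntervalIntegrable (fun ξ => h ξ (u ξ)) volume 0 t ∧
          u t = ∫ ξ in (0:ℝ)..t, h ξ (u ξ)) := by
  exact PeanoScaleSetup.main ⟨E, N, hscale_mono, hnorm_mono, hN_nonneg, hN_add, hN_smul,
    hN_ambient, hcomplete, hcompact, T, R, K, hT, hR, hK, h, hmaps, hconth, hboundh⟩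
end
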